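/- arXiv:1101.1161 — 3 statements merged into one kernel-verified Lean document; each statement's English description precedes it below -/
import Mathlib

section
/- Let (a_n)_{n≥0} be nonnegative reals with a_0 > 0, a_0 + a_1 < 1, ∑_{n=0}^∞ a_n = 1 and ∑_{n=1}^∞ n a_n = 1, let G(t) = ∑_{n=0}^∞ a_n t^n, and let β ∈ (0,1). Assume 1 − G'(x) ∼ (1−x)^β as x → 1−, i.e. there exist 0 < c₁ < c₂ and x₁ ∈ (0,1) with c₁(1−x)^β ≤ 1 − G'(x) ≤ c₂(1−x)^β for all x ∈ (x₁,1), where G'(x) = ∑_{n=1}^∞ n a_n x^{n−1}. Let (f_n)_{n≥1} be nonnegative reals with ∑_{n=1}^∞ f_n = 1 such that F(t) := ∑_{n=1}^∞ f_n t^n satisfies F(t) = t·G(F(t)) for all t ∈ (0,1). Then: (1) there exist constants 0 < c₁' < c₂' and t₀ ∈ (0,1) with c₁'(1−t)^{1/(1+β)} ≤ 1 − F(t) ≤ c₂'(1−t)^{1/(1+β)} for all t ∈ (t₀,1); (2) for α ∈ (0,1), ∑_{n=1}^∞ f_n n^α < ∞ if and only if α < 1/(1+β). -/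
open Finset

lemma geom_fact {x : ℝ} (n : ℕ) : (1-x) * ∑ j ∈ range n, x^j = 1 - x^n := by
  have := geom_sum_mul x n
  linear_combination -this

lemma key_ineq {x : ℝ} (h0 : 0 ≤ x) (h1 : x ≤ 1) {k m : ℕ} (hkm : k ≤ m) :
    (k:ℝ) * (1 - x^m) ≤ (m:ℝ) * (1 - x^k) := by
  have hx : 0 ≤ 1 - x := by linarith
  have hsplit : ∑ j ∈ range m, x^j = ∑ j ∈ range k, x^j + ∑ j ∈ Ico k m, x^j :=
    (Finset.sum_range_add_sum_Ico _ hkm).symm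
  have h2 : ∑ j ∈ Ico k m, x^j ≤ ((m:ℝ) - k) * x^k := by
    calc ∑ j ∈ Ico k m, x^j ≤ ∑ j ∈ Ico k m, x^k :=
          sum_le_sum (fun j hj => pow_le_pow_of_le_one h0 h1 (mem_Ico.1 hj).1)
      _ = ((m:ℝ) - k) * x^k := by
          rw [sum_const, Nat.card_Ico, nsmul_eq_mul, Nat.cast_sub hkm]
  have h3 : (k:ℝ) * x^k ≤ ∑ j ∈ range k, x^j := by
    calc (k:ℝ) * x^k = ∑ _j ∈ range k, x^k := by rw [sum_const, card_range, nsmul_eq_mul]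
      _ ≤ ∑ j ∈ range k, x^j :=
          sum_le_sum (fun j hj => pow_le_pow_of_le_one h0 h1 (le_of_lt (mem_range.1 hj)))
  have key : (k:ℝ) * ∑ j ∈ range m, x^j ≤ (m:ℝ) * ∑ j ∈ range k, x^j := by
    have hk0 : (0:ℝ) ≤ k := Nat.cast_nonneg k
    have hmk : (0:ℝ) ≤ (m:ℝ) - k := by
      have : (k:ℝ) ≤ m := Nat.cast_le.2 hkm; linarith
    nlinarith [mul_le_mul_of_nonneg_left h2 hk0, mul_le_mul_of_nonneg_left h3 hmk]
  have := mul_le_mul_of_nonneg_left key hx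
  calc (k:ℝ) * (1 - x^m) = (1-x) * ((k:ℝ) * ∑ j ∈ range m, x^j) := by
        rw [show (1-x) * ((k:ℝ) * ∑ j ∈ range m, x^j) = (k:ℝ) * ((1-x) * ∑ j ∈ range m, x^j) by ring,
          geom_fact]
    _ ≤ (1-x) * ((m:ℝ) * ∑ j ∈ range k, x^j) := this
    _ = (m:ℝ) * (1 - x^k) := by
        rw [show (1-x) * ((m:ℝ) * ∑ j ∈ range k, x^j) = (m:ℝ) * ((1-x) * ∑ j ∈ range k, x^j) by ring,
          geom_fact]

lemma blocksum_upper {x : ℝ} (h0 : 0 ≤ x) (h1 : x ≤ 1) (n : ℕ) :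
    ∑ k ∈ range n, (1 - x^k) ≤ (n:ℝ) * (1 - x^(n-1)) := by
  have : ∀ k ∈ range n, 1 - x^k ≤ 1 - x^(n-1) := by
    intro k hk
    have : x^(n-1) ≤ x^k := pow_le_pow_of_le_one h0 h1 (Nat.le_sub_one_of_lt (mem_range.1 hk))
    linarith
  calc ∑ k ∈ range n, (1 - x^k) ≤ ∑ _k ∈ range n, (1 - x^(n-1)) := sum_le_sum this
    _ = (n:ℝ) * (1 - x^(n-1)) := by rw [sum_const, card_range, nsmul_eq_mul]

lemma blocksum_lower {x : ℝ} (h0 : 0 ≤ x) (h1 : x ≤ 1) (n : ℕ) :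
    (n:ℝ) * (1 - x^(n-1)) ≤ 2 * ∑ k ∈ range n, (1 - x^k) := by
  rcases Nat.eq_zero_or_pos n with hn | hn
  · subst hn; simp
  have hS : 0 ≤ ∑ k ∈ range n, (1 - x^k) := by
    apply sum_nonneg; intro k _
    have : x^k ≤ 1 := pow_le_one₀ h0 h1
    linarith
  rcases Nat.lt_or_ge n 2 with hn2 | hn2
  · interval_cases n
    · norm_num
  -- n ≥ 2, m := n - 1 ≥ 1
  have hterm : ∀ k ∈ range n, (k:ℝ) * (1 - x^(n-1)) ≤ ((n-1:ℕ):ℝ) * (1 - x^k) := by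
    intro k hk
    exact key_ineq h0 h1 (Nat.le_sub_one_of_lt (mem_range.1 hk))
  have hsum := sum_le_sum hterm
  rw [← sum_mul, ← mul_sum] at hsum
  have gauss : (∑ k ∈ range n, (k:ℝ)) * 2 = (n:ℝ) * ((n-1:ℕ):ℝ) := by
    have h := Finset.sum_range_id_mul_two n
    have h2 : ((∑ i ∈ range n, i : ℕ) : ℝ) * 2 = (n:ℝ) * ((n-1:ℕ):ℝ) := by exact_mod_cast h
    rw [Nat.cast_sum] at h2
    exact h2
  have hm1 : (1:ℝ) ≤ ((n-1:ℕ):ℝ) := by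
    have : 1 ≤ n - 1 := Nat.le_sub_one_of_lt hn2
    exact_mod_cast this
  have hA : 0 ≤ 1 - x^(n-1) := by
    have : x^(n-1) ≤ 1 := pow_le_one₀ h0 h1
    linarith
  -- from hsum : (∑ k) * (1-x^(n-1)) ≤ (n-1) * S, and ∑ k = n(n-1)/2
  nlinarith [hsum, mul_le_mul_of_nonneg_right hm1 hA]

lemma summable_of_tsum_one {g : ℕ → ℝ} (h : ∑' n, g n = 1) : Summable g := by
  by_contra hs
  rw [tsum_eq_zero_of_not_summable hs] at h
  norm_num at h

lemma sum_pow_summable {a : ℕ → ℝ} (ha : ∀ n, 0 ≤ a n) (hs : Summable a)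
    {x : ℝ} (h0 : 0 ≤ x) (h1 : x ≤ 1) : Summable (fun n => a n * x ^ n) :=
  Summable.of_nonneg_of_le (fun n => mul_nonneg (ha n) (pow_nonneg h0 n))
    (fun n => mul_le_of_le_one_right (ha n) (pow_le_one₀ h0 h1)) hs

lemma sumD_summable {a : ℕ → ℝ} (ha : ∀ n, 0 ≤ a n)
    (hna : Summable (fun n : ℕ => (n:ℝ) * a n))
    {x : ℝ} (h0 : 0 ≤ x) (h1 : x ≤ 1) :
    Summable (fun n : ℕ => (n:ℝ) * a n * x ^ (n-1)) :=
  Summable.of_nonneg_of_le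
    (fun n => mul_nonneg (mul_nonneg (Nat.cast_nonneg n) (ha n)) (pow_nonneg h0 _))
    (fun n => mul_le_of_le_one_right (mul_nonneg (Nat.cast_nonneg n) (ha n)) (pow_le_one₀ h0 h1))
    hna

lemma one_sub_pow_nonneg {x : ℝ} (h0 : 0 ≤ x) (h1 : x ≤ 1) (k : ℕ) : 0 ≤ 1 - x^k := by
  have : x^k ≤ 1 := pow_le_one₀ h0 h1
  linarith

lemma sumE_summable {a : ℕ → ℝ} (ha : ∀ n, 0 ≤ a n)
    (hna : Summable (fun n : ℕ => (n:ℝ) * a n))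
    {x : ℝ} (h0 : 0 ≤ x) (h1 : x ≤ 1) :
    Summable (fun n => a n * ∑ k ∈ range n, (1 - x^k)) := by
  apply Summable.of_nonneg_of_le _ _ hna
  · intro n
    exact mul_nonneg (ha n) (sum_nonneg fun k _ => one_sub_pow_nonneg h0 h1 k)
  · intro n
    have h : ∑ k ∈ range n, (1 - x^k) ≤ (n:ℝ) := by
      calc ∑ k ∈ range n, (1 - x^k) ≤ ∑ _k ∈ range n, (1:ℝ) := by
            apply sum_le_sum; intro k _
            have := pow_nonneg h0 k; linarith
        _ = (n:ℝ) := by simp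
    calc a n * ∑ k ∈ range n, (1 - x^k) ≤ a n * n :=
          mul_le_mul_of_nonneg_left h (ha n)
      _ = (n:ℝ) * a n := by ring

lemma D_eq {a : ℕ → ℝ} (hμ : ∑' n : ℕ, (n:ℝ) * a n = 1)
    {x : ℝ} (hD : Summable (fun n : ℕ => (n:ℝ) * a n * x ^ (n-1))) :
    1 - ∑' n : ℕ, (n:ℝ) * a n * x^(n-1) = ∑' n : ℕ, (n:ℝ) * a n * (1 - x^(n-1)) := by
  have hna : Summable (fun n : ℕ => (n:ℝ) * a n) := summable_of_tsum_one hμ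
  have h : ∑' n : ℕ, (n:ℝ) * a n * (1 - x^(n-1))
      = (∑' n : ℕ, (n:ℝ) * a n) - ∑' n : ℕ, (n:ℝ) * a n * x^(n-1) := by
    rw [← Summable.tsum_sub hna hD]
    congr 1; funext n; ring
  rw [h, hμ]

lemma sum_one_sub_pow (s : ℝ) (n : ℕ) :
    (1-s) * ∑ k ∈ range n, (1 - s^k) = (n:ℝ) * (1-s) - (1 - s^n) := by
  have h1 : ∑ k ∈ range n, (1 - s^k) = (n:ℝ) - ∑ k ∈ range n, s^k := by
    rw [Finset.sum_sub_distrib]; simp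
  have h2 := geom_fact (x := s) n
  rw [h1]; ring_nf
  linear_combination -h2

lemma E_eq {a : ℕ → ℝ} (hsum : ∑' n, a n = 1) (hμ : ∑' n : ℕ, (n:ℝ) * a n = 1)
    {s : ℝ} (hG : Summable (fun n => a n * s ^ n))
    (hE : Summable (fun n => a n * ∑ k ∈ range n, (1 - s^k))) :
    (1-s) * ∑' n : ℕ, a n * ∑ k ∈ range n, (1 - s^k) = (∑' n : ℕ, a n * s^n) - s := by
  have hsa : Summable a := summable_of_tsum_one hsum
  have hna : Summable (fun n : ℕ => (n:ℝ) * a n) := summable_of_tsum_one hμ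
  have step1 : (1-s) * ∑' n : ℕ, a n * ∑ k ∈ range n, (1 - s^k)
      = ∑' n : ℕ, ((1-s) * ((n:ℝ) * a n) - (a n - a n * s^n)) := by
    rw [← tsum_mul_left]
    congr 1; funext n
    have h := sum_one_sub_pow s n
    calc (1-s) * (a n * ∑ k ∈ range n, (1 - s^k))
        = a n * ((1-s) * ∑ k ∈ range n, (1 - s^k)) := by ring
      _ = a n * ((n:ℝ) * (1-s) - (1 - s^n)) := by rw [h]
      _ = (1-s) * ((n:ℝ) * a n) - (a n - a n * s^n) := by ring
  rw [step1, Summable.tsum_sub (hna.mul_left _) (hsa.sub hG), tsum_mul_left,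
    Summable.tsum_sub hsa hG, hμ, hsum]
  ring

lemma sumDm_summable {a : ℕ → ℝ} (ha : ∀ n, 0 ≤ a n)
    (hna : Summable (fun n : ℕ => (n:ℝ) * a n))
    {x : ℝ} (h0 : 0 ≤ x) (h1 : x ≤ 1) :
    Summable (fun n : ℕ => (n:ℝ) * a n * (1 - x ^ (n-1))) := by
  apply Summable.of_nonneg_of_le _ _ hna
  · intro n
    exact mul_nonneg (mul_nonneg (Nat.cast_nonneg n) (ha n)) (one_sub_pow_nonneg h0 h1 _)
  · intro n
    apply mul_le_of_le_one_right (mul_nonneg (Nat.cast_nonneg n) (ha n))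
    have := pow_nonneg h0 (n-1); linarith

lemma E_le_D {a : ℕ → ℝ} (ha : ∀ n, 0 ≤ a n)
    (hna : Summable (fun n : ℕ => (n:ℝ) * a n))
    {x : ℝ} (h0 : 0 ≤ x) (h1 : x ≤ 1) :
    ∑' n : ℕ, a n * ∑ k ∈ range n, (1 - x^k) ≤ ∑' n : ℕ, (n:ℝ) * a n * (1 - x^(n-1)) := by
  apply Summable.tsum_le_tsum _ (sumE_summable ha hna h0 h1) (sumDm_summable ha hna h0 h1)
  intro n
  calc a n * ∑ k ∈ range n, (1 - x^k) ≤ a n * ((n:ℝ) * (1 - x^(n-1))) :=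
        mul_le_mul_of_nonneg_left (blocksum_upper h0 h1 n) (ha n)
    _ = (n:ℝ) * a n * (1 - x^(n-1)) := by ring

lemma D_le_2E {a : ℕ → ℝ} (ha : ∀ n, 0 ≤ a n)
    (hna : Summable (fun n : ℕ => (n:ℝ) * a n))
    {x : ℝ} (h0 : 0 ≤ x) (h1 : x ≤ 1) :
    ∑' n : ℕ, (n:ℝ) * a n * (1 - x^(n-1)) ≤ 2 * ∑' n : ℕ, a n * ∑ k ∈ range n, (1 - x^k) := by
  rw [← tsum_mul_left]
  apply Summable.tsum_le_tsum _ (sumDm_summable ha hna h0 h1) ((sumE_summable ha hna h0 h1).mul_left 2)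
  intro n
  calc (n:ℝ) * a n * (1 - x^(n-1)) = a n * ((n:ℝ) * (1 - x^(n-1))) := by ring
    _ ≤ a n * (2 * ∑ k ∈ range n, (1 - x^k)) :=
        mul_le_mul_of_nonneg_left (blocksum_lower h0 h1 n) (ha n)
    _ = 2 * (a n * ∑ k ∈ range n, (1 - x^k)) := by ring

lemma F_le_self {f : ℕ → ℝ} (hf : ∀ n, 0 ≤ f n) (hf0 : f 0 = 0) (hfsum : ∑' n, f n = 1)
    {t : ℝ} (h0 : 0 ≤ t) (h1 : t ≤ 1) : ∑' n : ℕ, f n * t^n ≤ t := by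
  have hsf : Summable f := summable_of_tsum_one hfsum
  have hterm : ∀ n : ℕ, f n * t^n ≤ f n * t := by
    intro n
    match n with
    | 0 => simp [hf0]
    | (m+1) =>
      exact mul_le_mul_of_nonneg_left (pow_le_of_le_one h0 h1 (Nat.succ_ne_zero m)) (hf _)
  calc ∑' n : ℕ, f n * t^n ≤ ∑' n : ℕ, f n * t :=
        Summable.tsum_le_tsum hterm (sum_pow_summable hf hsf h0 h1) (hsf.mul_right t)
    _ = t := by rw [tsum_mul_right, hfsum, one_mul]

lemma F_big {f : ℕ → ℝ} (hf : ∀ n, 0 ≤ f n) (hfsum : ∑' n, f n = 1)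
    {y : ℝ} (hy : y < 1) :
    ∃ t₀ : ℝ, 0 < t₀ ∧ t₀ < 1 ∧ ∀ t : ℝ, t₀ < t → t < 1 → y < ∑' n : ℕ, f n * t^n := by
  have hsf : Summable f := summable_of_tsum_one hfsum
  have htend : Filter.Tendsto (fun n => ∑ i ∈ range n, f i) Filter.atTop (nhds 1) := by
    rw [← hfsum]; exact hsf.hasSum.tendsto_sum_nat
  obtain ⟨N, hN⟩ := ((tendsto_order.1 htend).1 y hy).exists
  set g : ℝ → ℝ := fun t => ∑ i ∈ range N, f i * t^i with hg
  have hc : ContinuousAt g 1 := by fun_prop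
  have hg1 : g 1 = ∑ i ∈ range N, f i := by simp [hg]
  have hev : ∀ᶠ t in nhds (1:ℝ), y < g t := by
    apply hc.eventually_const_lt
    rw [hg1]; exact hN
  obtain ⟨δ, hδ0, hδ⟩ := Metric.eventually_nhds_iff.1 hev
  refine ⟨max (1 - δ/2) (1/2), lt_max_of_lt_right (by norm_num), ?_, ?_⟩
  · apply max_lt (by linarith) (by norm_num)
  · intro t ht ht1
    have ht2 : 1 - δ/2 < t := lt_of_le_of_lt (le_max_left _ _) ht
    have ht3 : (0:ℝ) < t := lt_of_lt_of_le (by norm_num) (le_of_lt (lt_of_le_of_lt (le_max_right _ _) ht))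
    have hdist : dist t 1 < δ := by
      rw [Real.dist_eq, abs_of_nonpos (by linarith)]
      linarith
    calc y < g t := hδ hdist
      _ ≤ ∑' n : ℕ, f n * t^n := by
          apply Summable.sum_le_tsum
          · intro i _
            exact mul_nonneg (hf i) (pow_nonneg (le_of_lt ht3) i)
          · exact sum_pow_summable hf hsf (le_of_lt ht3) (le_of_lt ht1)

lemma part1 (a : ℕ → ℝ) (ha : ∀ n, 0 ≤ a n) (ha0 : 0 < a 0)
    (ha01 : a 0 + a 1 < 1)
    (hsum : ∑' n, a n = 1) (hμ : ∑' n : ℕ, (n : ℝ) * a n = 1)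
    (β : ℝ) (hβ0 : 0 < β)
    (hG' : ∃ c₁ c₂ x₁ : ℝ, 0 < c₁ ∧ c₁ < c₂ ∧ 0 < x₁ ∧ x₁ < 1 ∧
      ∀ x : ℝ, x₁ < x → x < 1 →
        c₁ * (1 - x) ^ β ≤ 1 - ∑' n : ℕ, (n : ℝ) * a n * x ^ (n - 1) ∧
        1 - ∑' n : ℕ, (n : ℝ) * a n * x ^ (n - 1) ≤ c₂ * (1 - x) ^ β)
    (f : ℕ → ℝ) (hf : ∀ n, 0 ≤ f n) (hf0 : f 0 = 0) (hfsum : ∑' n, f n = 1)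
    (hFeq : ∀ t : ℝ, 0 < t → t < 1 →
      ∑' n : ℕ, f n * t ^ n = t * ∑' n : ℕ, a n * (∑' m : ℕ, f m * t ^ m) ^ n) :
    ∃ c₁' c₂' t₀ : ℝ, 0 < c₁' ∧ c₁' < c₂' ∧ 0 < t₀ ∧ t₀ < 1 ∧
      ∀ t : ℝ, t₀ < t → t < 1 →
        c₁' * (1 - t) ^ (1 / (1 + β)) ≤ 1 - ∑' n : ℕ, f n * t ^ n ∧
        1 - ∑' n : ℕ, f n * t ^ n ≤ c₂' * (1 - t) ^ (1 / (1 + β)) := by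
  obtain ⟨c₁, c₂, x₁, hc₁, hc₁₂, hx₁0, hx₁1, hbd⟩ := hG'
  have hc₂ : 0 < c₂ := lt_trans hc₁ hc₁₂
  have hsa : Summable a := summable_of_tsum_one hsum
  have hna : Summable (fun n : ℕ => (n:ℝ) * a n) := summable_of_tsum_one hμ
  have ha1 : a 0 < 1 := by linarith [ha 1]
  have hβ : (0:ℝ) < 1 + β := by linarith
  set γ : ℝ := 1 / (1 + β) with hγdef
  have hγ0 : 0 < γ := by positivity
  obtain ⟨t₀, ht₀0, ht₀1, hFt⟩ := F_big hf hfsum hx₁1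
  refine ⟨(a 0 / c₂) ^ γ, (2 / c₁) ^ γ, t₀, ?_, ?_, ht₀0, ht₀1, ?_⟩
  · exact Real.rpow_pos_of_pos (by positivity) γ
  · apply Real.rpow_lt_rpow (by positivity) _ hγ0
    rw [div_lt_div_iff₀ hc₂ hc₁]
    nlinarith
  intro t ht ht1
  set s := ∑' n : ℕ, f n * t ^ n with hs
  have ht0 : 0 < t := lt_trans ht₀0 ht
  have hsx : x₁ < s := hFt t ht ht1
  have hs0 : (0:ℝ) ≤ s := le_trans hx₁0.le hsx.le
  have hst : s ≤ t := F_le_self hf hf0 hfsum ht0.le ht1.le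
  have hs1 : s < 1 := lt_of_le_of_lt hst ht1
  have h1s : (0:ℝ) < 1 - s := by linarith
  have h1t : (0:ℝ) < 1 - t := by linarith
  set G := ∑' n : ℕ, a n * s ^ n with hG
  have hGsum : Summable (fun n : ℕ => a n * s ^ n) := sum_pow_summable ha hsa hs0 hs1.le
  have hGle : G ≤ 1 := by
    rw [hG, ← hsum]
    apply Summable.tsum_le_tsum _ hGsum hsa
    intro n
    exact mul_le_of_le_one_right (ha n) (pow_le_one₀ hs0 hs1.le)
  have hGge : a 0 ≤ G := by
    have h := Summable.le_tsum hGsum 0 (fun j _ => mul_nonneg (ha j) (pow_nonneg hs0 j))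
    simpa using h
  have hfeq : s = t * G := hFeq t ht0 ht1
  set E := ∑' n : ℕ, a n * ∑ k ∈ range n, (1 - s^k) with hEdef
  have hEsum : Summable (fun n : ℕ => a n * ∑ k ∈ range n, (1 - s^k)) :=
    sumE_summable ha hna hs0 hs1.le
  have hkey : (1-t) * G = (1-s) * E := by
    have h1 : (1-s) * E = G - s := E_eq hsum hμ hGsum hEsum
    have h2 : (1-t) * G = G - t * G := by ring
    rw [h2, ← hfeq, h1]
  have hDs := hbd s hsx hs1
  have hDeq := D_eq hμ (sumD_summable ha hna hs0 hs1.le)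
  rw [hDeq] at hDs
  have hE_le : E ≤ c₂ * (1-s)^β := le_trans (E_le_D ha hna hs0 hs1.le) hDs.2
  have h2E_ge : c₁ * (1-s)^β ≤ 2 * E := le_trans hDs.1 (D_le_2E ha hna hs0 hs1.le)
  have hpow : (1-s) * (1-s)^β = (1-s)^(1+β) := by
    rw [Real.rpow_add h1s, Real.rpow_one]
  have hrpβ : (0:ℝ) ≤ (1-s)^β := Real.rpow_nonneg h1s.le β
  have hup : a 0 * (1-t) ≤ (1-s)^(1+β) * c₂ := by
    have e1 : a 0 * (1-t) ≤ (1-t) * G := by nlinarith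
    have e2 : (1-s) * E ≤ (1-s) * (c₂ * (1-s)^β) :=
      mul_le_mul_of_nonneg_left hE_le h1s.le
    rw [hkey] at e1
    calc a 0 * (1-t) ≤ (1-s) * (c₂ * (1-s)^β) := le_trans e1 e2
      _ = (1-s) * (1-s)^β * c₂ := by ring
      _ = (1-s)^(1+β) * c₂ := by rw [hpow]
  have hlo : (1-s)^(1+β) * c₁ ≤ 2 * (1-t) := by
    have e1 : (1-s) * (c₁ * (1-s)^β) ≤ (1-s) * (2 * E) :=
      mul_le_mul_of_nonneg_left h2E_ge h1s.le
    have e2 : (1-t) * G ≤ (1-t) * 1 := mul_le_mul_of_nonneg_left hGle h1t.le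
    have e3 : (1-s) * E ≤ 1 - t := by rw [← hkey]; linarith
    calc (1-s)^(1+β) * c₁ = (1-s) * (c₁ * (1-s)^β) := by rw [← hpow]; ring
      _ ≤ (1-s) * (2 * E) := e1
      _ = 2 * ((1-s) * E) := by ring
      _ ≤ 2 * (1-t) := by linarith
  have hγβ : (1+β) * γ = 1 := by
    rw [hγdef]; field_simp
  have hpowid : ((1-s)^(1+β) : ℝ)^γ = 1 - s := by
    rw [← Real.rpow_mul h1s.le, hγβ, Real.rpow_one]
  constructor
  · have h1 : (a 0 / c₂) * (1-t) ≤ (1-s)^(1+β) := by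
      rw [div_mul_eq_mul_div, div_le_iff₀ hc₂]
      linarith
    have h2 := Real.rpow_le_rpow (by positivity) h1 hγ0.le
    rw [Real.mul_rpow (by positivity) h1t.le, hpowid] at h2
    exact h2
  · have h1 : (1-s)^(1+β) ≤ (2/c₁) * (1-t) := by
      rw [div_mul_eq_mul_div, le_div_iff₀ hc₁]
      linarith
    have h2 := Real.rpow_le_rpow (Real.rpow_nonneg h1s.le _) h1 hγ0.le
    rw [Real.mul_rpow (by positivity) h1t.le, hpowid] at h2
    exact h2

lemma one_sub_F_eq {f : ℕ → ℝ} (hf : ∀ n, 0 ≤ f n) (hfsum : ∑' n, f n = 1)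
    {t : ℝ} (h0 : 0 ≤ t) (h1 : t ≤ 1) :
    1 - ∑' n : ℕ, f n * t^n = ∑' n : ℕ, f n * (1 - t^n) := by
  have hsf : Summable f := summable_of_tsum_one hfsum
  have hFs := sum_pow_summable hf hsf h0 h1
  have h : ∑' n : ℕ, f n * (1 - t^n) = (∑' n, f n) - ∑' n : ℕ, f n * t^n := by
    rw [← Summable.tsum_sub hsf hFs]
    congr 1; funext n; ring
  rw [h, hfsum]

lemma tail_le_one_sub_F {f : ℕ → ℝ} (hf : ∀ n, 0 ≤ f n) (hfsum : ∑' n, f n = 1)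
    {t : ℝ} (h0 : 0 ≤ t) (h1 : t ≤ 1) (n : ℕ) :
    (∑' k : ℕ, f (k + n)) * (1 - t^n) ≤ 1 - ∑' m : ℕ, f m * t^m := by
  have hsf : Summable f := summable_of_tsum_one hfsum
  have hsft : Summable (fun k => f (k + n)) := (summable_nat_add_iff n).2 hsf
  have hnn : ∀ k m : ℕ, 0 ≤ f k * (1 - t^m) :=
    fun k m => mul_nonneg (hf k) (one_sub_pow_nonneg h0 h1 m)
  have hsum1 : Summable (fun k : ℕ => f (k + n) * (1 - t^(k+n))) :=
    Summable.of_nonneg_of_le (fun k => hnn _ _)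
      (fun k => mul_le_of_le_one_right (hf _) (by
        have := pow_nonneg h0 (k+n); linarith)) hsft
  have hsum2 : Summable (fun k : ℕ => f k * (1 - t^k)) :=
    Summable.of_nonneg_of_le (fun k => hnn _ _)
      (fun k => mul_le_of_le_one_right (hf _) (by
        have := pow_nonneg h0 k; linarith)) hsf
  rw [one_sub_F_eq hf hfsum h0 h1, ← tsum_mul_right]
  calc ∑' k : ℕ, f (k + n) * (1 - t^n)
      ≤ ∑' k : ℕ, f (k + n) * (1 - t^(k+n)) := by
        apply Summable.tsum_le_tsum _ _ hsum1
        · intro k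
          apply mul_le_mul_of_nonneg_left _ (hf _)
          have : t^(k+n) ≤ t^n := pow_le_pow_of_le_one h0 h1 (Nat.le_add_left n k)
          linarith
        · exact Summable.of_nonneg_of_le (fun k => hnn _ _)
            (fun k => mul_le_of_le_one_right (hf _) (by
              have := pow_nonneg h0 n; linarith)) hsft
    _ ≤ ∑' k : ℕ, f k * (1 - t^k) := by
        exact Summable.tsum_le_tsum_of_inj (fun k : ℕ => k + n)
          (add_left_injective n) (fun c _ => hnn c c) (fun i : ℕ => le_rfl) hsum1 hsum2

lemma half_le_one_sub_pow {n : ℕ} (hn : 1 ≤ n) : (1:ℝ)/2 ≤ 1 - (1 - 1/(n:ℝ))^n := by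
  have hn0 : (0:ℝ) < n := by exact_mod_cast hn
  have h1 : 1 - 1/(n:ℝ) ≤ Real.exp (-(1/n)) := by
    have := Real.add_one_le_exp (-(1/(n:ℝ)))
    linarith
  have h0 : (0:ℝ) ≤ 1 - 1/(n:ℝ) := by
    have : 1/(n:ℝ) ≤ 1 := by
      rw [div_le_one hn0]; exact_mod_cast hn
    linarith
  have h2 : (1 - 1/(n:ℝ))^n ≤ Real.exp (-(1/n)) ^ n := pow_le_pow_left₀ h0 h1 n
  have h3 : Real.exp (-(1/(n:ℝ))) ^ n = Real.exp (-1) := by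
    rw [← Real.exp_nat_mul]
    congr 1
    field_simp
  have h4 : Real.exp (-1) ≤ 1/2 := by
    rw [Real.exp_neg]
    have : (2:ℝ) ≤ Real.exp 1 := by
      have := Real.add_one_le_exp (1:ℝ); linarith
    rw [one_div]
    exact inv_anti₀ (by norm_num) this
  rw [h3] at h2
  linarith

lemma tail_bound {f : ℕ → ℝ} (hf : ∀ n, 0 ≤ f n) (hfsum : ∑' n, f n = 1)
    {γ c₂' t₀ : ℝ} (hc₂' : 0 ≤ c₂')
    (hup : ∀ t : ℝ, t₀ < t → t < 1 → 1 - ∑' n : ℕ, f n * t^n ≤ c₂' * (1-t)^γ)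
    {n : ℕ} (hn : 1 ≤ n) (hnt : t₀ < 1 - 1/(n:ℝ)) :
    ∑' k : ℕ, f (k + n) ≤ 2 * c₂' * ((1:ℝ)/n)^γ := by
  have hn0 : (0:ℝ) < n := by exact_mod_cast hn
  set t : ℝ := 1 - 1/n with htdef
  have hinv : (0:ℝ) < 1/n := by positivity
  have ht1 : t < 1 := by rw [htdef]; linarith
  have ht0 : (0:ℝ) ≤ t := by
    rw [htdef]
    have : 1/(n:ℝ) ≤ 1 := by rw [div_le_one hn0]; exact_mod_cast hn
    linarith
  have hub := hup t hnt ht1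
  have h1t : 1 - t = 1/(n:ℝ) := by rw [htdef]; ring
  rw [h1t] at hub
  have hT := tail_le_one_sub_F hf hfsum ht0 ht1.le n
  have hhalf := half_le_one_sub_pow hn
  rw [← htdef] at hhalf
  have hTnn : 0 ≤ ∑' k : ℕ, f (k + n) :=
    tsum_nonneg (fun k => hf _)
  nlinarith [mul_le_mul_of_nonneg_left hhalf hTnn]

lemma pow2_calc (α γ : ℝ) (j : ℕ) :
    ((2:ℝ)^(j+1))^α * ((1:ℝ)/(2:ℝ)^j)^γ = (2:ℝ)^α * ((2:ℝ)^(α-γ))^j := by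
  rw [one_div, ← Real.rpow_natCast (2:ℝ) (j+1), ← Real.rpow_natCast (2:ℝ) j,
    ← Real.rpow_neg (by norm_num), ← Real.rpow_mul (by norm_num),
    ← Real.rpow_mul (by norm_num), ← Real.rpow_natCast ((2:ℝ)^(α-γ)) j,
    ← Real.rpow_mul (by norm_num), ← Real.rpow_add (by norm_num : (0:ℝ) < 2),
    ← Real.rpow_add (by norm_num : (0:ℝ) < 2)]
  congr 1
  push_cast
  ring

lemma part2_mpr {f : ℕ → ℝ} (hf : ∀ n, 0 ≤ f n) (hf0 : f 0 = 0) (hfsum : ∑' n, f n = 1)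
    {γ α c₂' t₀ : ℝ} (hc₂' : 0 ≤ c₂') (ht₀1 : t₀ < 1) (hα0 : 0 ≤ α)
    (hup : ∀ t : ℝ, t₀ < t → t < 1 → 1 - ∑' n : ℕ, f n * t^n ≤ c₂' * (1-t)^γ)
    (hαγ : α < γ) : Summable (fun n : ℕ => f n * (n:ℝ)^α) := by
  have hsf : Summable f := summable_of_tsum_one hfsum
  set g : ℕ → ℝ := fun n => f n * (n:ℝ)^α with hgdef
  have hgnn : ∀ n, 0 ≤ g n := fun n => mul_nonneg (hf n) (Real.rpow_nonneg (Nat.cast_nonneg n) α)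
  set T : ℕ → ℝ := fun n => ∑' k : ℕ, f (k + n) with hTdef
  have hTnn : ∀ n, 0 ≤ T n := fun n => tsum_nonneg (fun k => hf _)
  have hT1 : ∀ n, T n ≤ 1 := by
    intro n
    have h := Summable.sum_add_tsum_nat_add n hsf
    rw [hfsum] at h
    have : 0 ≤ ∑ i ∈ range n, f i := sum_nonneg (fun i _ => hf i)
    simp only [hTdef]
    linarith
  -- choose n₀
  obtain ⟨n₀', hn₀'⟩ := exists_nat_gt (2/(1-t₀))
  set n₀ := n₀' + 1 with hn₀def
  have hn₀pos : (0:ℝ) < n₀ := by positivity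
  have hn₀big : 2/(1-t₀) < (n₀:ℝ) := by
    rw [hn₀def]; push_cast; push_cast at hn₀'; linarith
  have htail : ∀ n : ℕ, n₀ ≤ n → T n ≤ 2*c₂'*((1:ℝ)/n)^γ := by
    intro n hn
    have h1n : 1 ≤ n := le_trans (by omega) hn
    have hnR : (n₀:ℝ) ≤ n := by exact_mod_cast hn
    have h1t₀ : (0:ℝ) < 1 - t₀ := by linarith
    have hnbig : 2/(1-t₀) < (n:ℝ) := lt_of_lt_of_le hn₀big hnR
    have hnt : t₀ < 1 - 1/(n:ℝ) := by
      have hn0 : (0:ℝ) < n := by positivity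
      have h2 : 1/(n:ℝ) < (1-t₀)/2 := by
        rw [div_lt_div_iff₀ hn0 (by norm_num : (0:ℝ) < 2)]
        rw [div_lt_iff₀ h1t₀] at hnbig
        linarith
      linarith
    exact tail_bound hf hfsum hc₂' hup h1n hnt
  -- geometric ratio
  set r : ℝ := (2:ℝ)^(α - γ) with hrdef
  have hr0 : 0 ≤ r := Real.rpow_nonneg (by norm_num) _
  have hr1 : r < 1 := Real.rpow_lt_one_of_one_lt_of_neg (by norm_num) (by linarith)
  set C₀ : ℝ := ((2:ℝ)^(n₀+1))^α with hC₀def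
  have hC₀nn : 0 ≤ C₀ := Real.rpow_nonneg (by positivity) _
  set Cr : ℝ := (2:ℝ)^α * (2*c₂') with hCrdef
  have hCrnn : 0 ≤ Cr := mul_nonneg (Real.rpow_nonneg (by norm_num) _) (by linarith)
  -- block bounds
  have hblock : ∀ j : ℕ, ∑ k ∈ Ico (2^j) (2^(j+1)), g k ≤ ((2:ℝ)^(j+1))^α * T (2^j) := by
    intro j
    have hstep : ∀ k ∈ Ico (2^j) (2^(j+1)), g k ≤ ((2:ℝ)^(j+1))^α * f k := by
      intro k hk
      have hk2 : (k:ℝ) ≤ (2:ℝ)^(j+1) := by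
        have := (mem_Ico.1 hk).2
        have : (k:ℝ) ≤ ((2^(j+1) : ℕ):ℝ) := by exact_mod_cast le_of_lt this
        push_cast at this
        linarith
      have : (k:ℝ)^α ≤ ((2:ℝ)^(j+1))^α :=
        Real.rpow_le_rpow (Nat.cast_nonneg k) hk2 hα0
      calc g k = f k * (k:ℝ)^α := rfl
        _ ≤ f k * ((2:ℝ)^(j+1))^α := mul_le_mul_of_nonneg_left this (hf k)
        _ = ((2:ℝ)^(j+1))^α * f k := by ring
    calc ∑ k ∈ Ico (2^j) (2^(j+1)), g k ≤ ∑ k ∈ Ico (2^j) (2^(j+1)), ((2:ℝ)^(j+1))^α * f k :=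
          sum_le_sum hstep
      _ = ((2:ℝ)^(j+1))^α * ∑ k ∈ Ico (2^j) (2^(j+1)), f k := by rw [mul_sum]
      _ ≤ ((2:ℝ)^(j+1))^α * T (2^j) := by
          apply mul_le_mul_of_nonneg_left _ (Real.rpow_nonneg (by positivity) _)
          rw [Finset.sum_Ico_eq_sum_range]
          have hre : ∀ i, f (2^j + i) = f (i + 2^j) := fun i => by rw [add_comm]
          calc ∑ i ∈ range (2^(j+1) - 2^j), f (2^j + i)
              = ∑ i ∈ range (2^(j+1) - 2^j), f (i + 2^j) := by
                apply Finset.sum_congr rfl; intro i _; rw [add_comm]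
            _ ≤ T (2^j) := Summable.sum_le_tsum _ (fun i _ => hf _) ((summable_nat_add_iff (2^j)).2 hsf)
  -- uniform bound on blocks
  have hbd : ∀ j : ℕ, ∑ k ∈ Ico (2^j) (2^(j+1)), g k ≤
      (if j < n₀ then C₀ else 0) + Cr * r^j := by
    intro j
    rcases lt_or_ge j n₀ with hj | hj
    · rw [if_pos hj]
      have h1 : ((2:ℝ)^(j+1))^α * T (2^j) ≤ C₀ * 1 := by
        apply mul_le_mul _ (hT1 _) (hTnn _) hC₀nn
        apply Real.rpow_le_rpow (by positivity) _ hα0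
        exact pow_le_pow_right₀ (by norm_num) (by omega)
      have := le_trans (hblock j) h1
      have hrj : 0 ≤ Cr * r^j := mul_nonneg hCrnn (pow_nonneg hr0 j)
      linarith
    · rw [if_neg (not_lt.2 hj)]
      have h2j : n₀ ≤ 2^j := le_trans hj (le_of_lt (Nat.lt_two_pow_self (n := j)))
      have htj := htail (2^j) h2j
      have hcast : ((2^j : ℕ):ℝ) = (2:ℝ)^j := by push_cast; ring
      rw [hcast] at htj
      have h1 : ((2:ℝ)^(j+1))^α * T (2^j) ≤ ((2:ℝ)^(j+1))^α * (2*c₂'*((1:ℝ)/(2:ℝ)^j)^γ) :=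
        mul_le_mul_of_nonneg_left htj (Real.rpow_nonneg (by positivity) _)
      have h2 : ((2:ℝ)^(j+1))^α * (2*c₂'*((1:ℝ)/(2:ℝ)^j)^γ) = Cr * r^j := by
        rw [hCrdef, hrdef]
        have h := pow2_calc α γ j
        linear_combination (2*c₂') * h
      rw [h2] at h1
      calc ∑ k ∈ Ico (2^j) (2^(j+1)), g k ≤ ((2:ℝ)^(j+1))^α * T (2^j) := hblock j
        _ ≤ 0 + Cr * r^j := by linarith
  -- partial sums bounded
  apply summable_of_sum_range_le hgnn (c := C₀ * n₀ + Cr * (1-r)⁻¹)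
  intro n
  have hsub : ∑ i ∈ range n, g i ≤ ∑ i ∈ range (2^n), g i := by
    apply sum_le_sum_of_subset_of_nonneg
    · exact Finset.range_subset_range.2 (le_of_lt (Nat.lt_two_pow_self (n := n)))
    · intro i _ _; exact hgnn i
  have hdec : ∀ J : ℕ, ∑ k ∈ range (2^J), g k
      = g 0 + ∑ j ∈ range J, ∑ k ∈ Ico (2^j) (2^(j+1)), g k := by
    intro J
    induction J with
    | zero => simp
    | succ J ih =>
      rw [sum_range_succ, ← add_assoc, ← ih, range_eq_Ico, range_eq_Ico]
      exact (Finset.sum_Ico_consecutive g (Nat.zero_le _)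
        (Nat.pow_le_pow_right (n := 2) (by norm_num) (by omega : J ≤ J + 1))).symm
  have hg0 : g 0 = 0 := by simp [hgdef, hf0]
  have hgeo : ∑ j ∈ range n, r^j ≤ (1-r)⁻¹ := by
    apply Summable.sum_le_tsum _ (fun i _ => pow_nonneg hr0 i)
      (summable_geometric_of_lt_one hr0 hr1)
      |>.trans_eq (tsum_geometric_of_lt_one hr0 hr1)
  have hind : ∑ j ∈ range n, (if j < n₀ then C₀ else 0) ≤ C₀ * n₀ := by
    calc ∑ j ∈ range n, (if j < n₀ then C₀ else 0)
        = ∑ j ∈ (range n).filter (· < n₀), C₀ := by rw [Finset.sum_filter]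
      _ ≤ ∑ _j ∈ range n₀, C₀ := by
          apply sum_le_sum_of_subset_of_nonneg
          · intro j hj
            rw [Finset.mem_filter] at hj
            exact Finset.mem_range.2 hj.2
          · intro i _ _; exact hC₀nn
      _ = C₀ * n₀ := by rw [sum_const, card_range, nsmul_eq_mul]; ring
  calc ∑ i ∈ range n, g i ≤ ∑ i ∈ range (2^n), g i := hsub
    _ = g 0 + ∑ j ∈ range n, ∑ k ∈ Ico (2^j) (2^(j+1)), g k := hdec n
    _ ≤ 0 + ∑ j ∈ range n, ((if j < n₀ then C₀ else 0) + Cr * r^j) := by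
        rw [hg0]
        exact add_le_add le_rfl (sum_le_sum (fun j _ => hbd j))
    _ = ∑ j ∈ range n, (if j < n₀ then C₀ else 0) + Cr * ∑ j ∈ range n, r^j := by
        rw [sum_add_distrib, mul_sum]; ring
    _ ≤ C₀ * n₀ + Cr * (1-r)⁻¹ := by
        apply add_le_add hind
        exact mul_le_mul_of_nonneg_left hgeo hCrnn

set_option maxHeartbeats 1000000 in
lemma part2_notsum {f : ℕ → ℝ} (hf : ∀ n, 0 ≤ f n) (hfsum : ∑' n, f n = 1)
    {γ c₁' t₀ : ℝ} (hγ0 : 0 < γ) (hγ1 : γ < 1) (hc₁' : 0 < c₁')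
    (ht₀0 : 0 < t₀) (ht₀1 : t₀ < 1)
    (hlow : ∀ t : ℝ, t₀ < t → t < 1 → c₁' * (1-t)^γ ≤ 1 - ∑' n : ℕ, f n * t^n) :
    ¬ Summable (fun n : ℕ => f n * (n:ℝ)^γ) := by
  intro hS
  set g : ℕ → ℝ := fun n => f n * (n:ℝ)^γ with hgdef
  have hgnn : ∀ n, 0 ≤ g n := fun n => mul_nonneg (hf n) (Real.rpow_nonneg (Nat.cast_nonneg n) γ)
  have htend := tendsto_sum_nat_add g
  have hev : ∀ᶠ M in Filter.atTop, (∑' k : ℕ, g (k + M)) < c₁'/8 :=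
    (tendsto_order.1 htend).2 (c₁'/8) (by positivity)
  obtain ⟨M, hSM, hM1⟩ := (hev.and (Filter.eventually_ge_atTop 1)).exists
  set S := ∑' k : ℕ, g (k + M) with hSdef
  have hSnn : 0 ≤ S := tsum_nonneg (fun k => hgnn _)
  have hM0 : (0:ℝ) < M := by exact_mod_cast hM1
  -- choose ε
  have h1γ : (0:ℝ) < 1 - γ := by linarith
  set δ : ℝ := (c₁'/(4*M))^(1/(1-γ)) with hδdef
  have hδ0 : 0 < δ := Real.rpow_pos_of_pos (by positivity) _
  set ε : ℝ := min (min ((1-t₀)/2) (1/(2*M))) δ with hεdef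
  have hε0 : 0 < ε := lt_min (lt_min (by linarith) (by positivity)) hδ0
  have hε1 : ε ≤ (1-t₀)/2 := le_trans (min_le_left _ _) (min_le_left _ _)
  have hε2 : ε ≤ 1/(2*M) := le_trans (min_le_left _ _) (min_le_right _ _)
  have hε3 : ε ≤ δ := min_le_right _ _
  have hεhalf : ε ≤ 1/2 := by
    apply le_trans hε1; linarith
  set t : ℝ := 1 - ε with htdef
  have ht : t₀ < t := by rw [htdef]; linarith
  have ht1 : t < 1 := by rw [htdef]; linarith
  have ht0 : (0:ℝ) ≤ t := by rw [htdef]; linarith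
  have h1tε : 1 - t = ε := by rw [htdef]; ring
  -- N
  set N : ℕ := ⌈1/ε⌉₊ with hNdef
  have hNge : 1/ε ≤ (N:ℝ) := Nat.le_ceil _
  have hNR0 : (0:ℝ) < N := lt_of_lt_of_le (by positivity) hNge
  have hinv2M : 2*M ≤ 1/ε := by
    rw [le_div_iff₀ hε0]
    calc 2*M*ε ≤ 2*M*(1/(2*M)) := by
          apply mul_le_mul_of_nonneg_left hε2 (by positivity)
      _ = 1 := by field_simp
  have hM1R : (1:ℝ) ≤ M := by exact_mod_cast hM1
  have hN1 : (1:ℝ) ≤ 1/ε := by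
    calc (1:ℝ) ≤ 2*M := by linarith
      _ ≤ 1/ε := hinv2M
  have hNle : (N:ℝ) ≤ 2/ε := by
    have h := Nat.ceil_lt_add_one (le_of_lt (by positivity : (0:ℝ) < 1/ε))
    have : (N:ℝ) < 1/ε + 1 := h
    have h2 : 1/ε + 1 ≤ 2/ε := by
      have : 2/ε = 1/ε + 1/ε := by ring
      linarith
    linarith
  have hMN : M ≤ N := by
    have : (M:ℝ) ≤ (N:ℝ) := by linarith
    exact_mod_cast this
  -- N^{-γ} ≤ ε^γ
  have hNεγ : ((N:ℝ)^γ)⁻¹ ≤ ε^γ := by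
    have h1 : (ε^γ)⁻¹ ≤ (N:ℝ)^γ := by
      have h2 : (1/ε)^γ ≤ (N:ℝ)^γ := Real.rpow_le_rpow (by positivity) hNge hγ0.le
      rw [one_div, Real.inv_rpow hε0.le] at h2
      exact h2
    have h3 := inv_anti₀ (by positivity : (0:ℝ) < (ε^γ)⁻¹) h1
    rwa [inv_inv] at h3
  have hεNγ : ε * (N:ℝ)^(1-γ) ≤ 2 * ε^γ := by
    have hsplit : (N:ℝ)^(1-γ) = (N:ℝ) * ((N:ℝ)^γ)⁻¹ := by
      rw [show (1:ℝ)-γ = 1 + (-γ) by ring, Real.rpow_add hNR0, Real.rpow_one,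
        Real.rpow_neg hNR0.le]
    rw [hsplit]
    have hεN : ε * (N:ℝ) ≤ 2 := by
      calc ε * (N:ℝ) ≤ ε * (2/ε) := mul_le_mul_of_nonneg_left hNle hε0.le
        _ = 2 := by field_simp
    calc ε * ((N:ℝ) * ((N:ℝ)^γ)⁻¹) = (ε * N) * ((N:ℝ)^γ)⁻¹ := by ring
      _ ≤ 2 * ε^γ := by
          apply mul_le_mul hεN hNεγ (by positivity) (by norm_num)
  -- tail mono
  have hgM : Summable (fun k : ℕ => g (k + M)) := (summable_nat_add_iff M).2 hS
  have htmono : ∑' k : ℕ, g (k + N) ≤ S := by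
    have h := Summable.sum_add_tsum_nat_add (f := fun k : ℕ => g (k + M)) (N - M) hgM
    have hre : (∑' i : ℕ, g (i + (N - M) + M)) = ∑' i : ℕ, g (i + N) := by
      apply tsum_congr; intro i; congr 1; omega
    rw [hre] at h
    have hp : 0 ≤ ∑ i ∈ range (N - M), g (i + M) := sum_nonneg (fun i _ => hgnn _)
    rw [hSdef]
    linarith
  -- summabilities
  have hsf : Summable f := summable_of_tsum_one hfsum
  have hWnn : ∀ k : ℕ, 0 ≤ f k * (1 - t^k) :=
    fun k => mul_nonneg (hf k) (one_sub_pow_nonneg ht0 ht1.le k)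
  have hWsum : Summable (fun k : ℕ => f k * (1 - t^k)) :=
    Summable.of_nonneg_of_le hWnn
      (fun k => mul_le_of_le_one_right (hf _) (by have := pow_nonneg ht0 k; linarith)) hsf
  -- Part A
  have hb1 : ∀ k : ℕ, 1 - t^k ≤ k * ε := by
    intro k
    have := one_add_mul_le_pow (by linarith : (-2:ℝ) ≤ -ε) k
    have h2 : 1 + (k:ℝ) * (-ε) ≤ (1 + (-ε))^k := this
    rw [htdef]
    have : (1 + (-ε) : ℝ) = 1 - ε := by ring
    rw [this] at h2
    linarith
  have hA : ∑ k ∈ range N, f k * (1 - t^k) ≤ ε*M + 2*ε^γ*S := by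
    have step1 : ∑ k ∈ range N, f k * (1 - t^k) ≤ ∑ k ∈ range N, f k * ((k:ℝ) * ε) :=
      sum_le_sum (fun k _ => mul_le_mul_of_nonneg_left (hb1 k) (hf k))
    have hsplitNM : ∑ k ∈ range M, f k * ((k:ℝ)*ε) + ∑ k ∈ Ico M N, f k * ((k:ℝ)*ε)
        = ∑ k ∈ range N, f k * ((k:ℝ)*ε) := Finset.sum_range_add_sum_Ico _ hMN
    have hpart1 : ∑ k ∈ range M, f k * ((k:ℝ)*ε) ≤ ε * M := by
      calc ∑ k ∈ range M, f k * ((k:ℝ)*ε) ≤ ∑ k ∈ range M, f k * ((M:ℝ)*ε) := by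
            apply sum_le_sum; intro k hk
            have : (k:ℝ) ≤ M := by exact_mod_cast le_of_lt (mem_range.1 hk)
            apply mul_le_mul_of_nonneg_left _ (hf k)
            apply mul_le_mul_of_nonneg_right this hε0.le
        _ = ((M:ℝ)*ε) * ∑ k ∈ range M, f k := by rw [← sum_mul]; ring
        _ ≤ ((M:ℝ)*ε) * 1 := by
            apply mul_le_mul_of_nonneg_left _ (by positivity)
            rw [← hfsum]
            exact Summable.sum_le_tsum _ (fun i _ => hf i) hsf
        _ = ε * M := by ring
    have hpart2 : ∑ k ∈ Ico M N, f k * ((k:ℝ)*ε) ≤ 2*ε^γ*S := by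
      have hterm : ∀ k ∈ Ico M N, f k * ((k:ℝ)*ε) ≤ (ε * (N:ℝ)^(1-γ)) * g k := by
        intro k hk
        have hkM : M ≤ k := (mem_Ico.1 hk).1
        have hkN : k < N := (mem_Ico.1 hk).2
        have hk0 : (0:ℝ) < k := lt_of_lt_of_le hM0 (by exact_mod_cast hkM)
        have hkdec : (k:ℝ) = (k:ℝ)^γ * (k:ℝ)^(1-γ) := by
          rw [← Real.rpow_add hk0]
          norm_num
        have hkNr : (k:ℝ)^(1-γ) ≤ (N:ℝ)^(1-γ) := by
          apply Real.rpow_le_rpow (Nat.cast_nonneg k) _ h1γ.le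
          exact_mod_cast le_of_lt hkN
        calc f k * ((k:ℝ)*ε) = f k * (((k:ℝ)^γ * (k:ℝ)^(1-γ))*ε) := by rw [← hkdec]
          _ ≤ f k * (((k:ℝ)^γ * (N:ℝ)^(1-γ))*ε) := by
              apply mul_le_mul_of_nonneg_left _ (hf k)
              apply mul_le_mul_of_nonneg_right _ hε0.le
              apply mul_le_mul_of_nonneg_left hkNr (Real.rpow_nonneg (Nat.cast_nonneg k) γ)
          _ = (ε * (N:ℝ)^(1-γ)) * (f k * (k:ℝ)^γ) := by ring
          _ = (ε * (N:ℝ)^(1-γ)) * g k := rfl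
      have hsum2 : ∑ k ∈ Ico M N, g k ≤ S := by
        rw [Finset.sum_Ico_eq_sum_range]
        calc ∑ i ∈ range (N - M), g (M + i) = ∑ i ∈ range (N - M), g (i + M) := by
              apply Finset.sum_congr rfl; intro i _; rw [add_comm]
          _ ≤ S := Summable.sum_le_tsum _ (fun i _ => hgnn _) hgM
      calc ∑ k ∈ Ico M N, f k * ((k:ℝ)*ε) ≤ ∑ k ∈ Ico M N, (ε * (N:ℝ)^(1-γ)) * g k :=
            sum_le_sum hterm
        _ = (ε * (N:ℝ)^(1-γ)) * ∑ k ∈ Ico M N, g k := by rw [mul_sum]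
        _ ≤ (2*ε^γ) * S := by
            apply mul_le_mul hεNγ hsum2 (sum_nonneg (fun k _ => hgnn k)) (by positivity)
        _ = 2*ε^γ*S := by ring
    linarith
  -- Part B
  have hgN : Summable (fun k : ℕ => g (k + N)) := (summable_nat_add_iff N).2 hS
  have hfN : Summable (fun k : ℕ => f (k + N)) := (summable_nat_add_iff N).2 hsf
  have hB : ∑' k : ℕ, f (k + N) * (1 - t^(k+N)) ≤ ε^γ * S := by
    have hTNle : ∑' k : ℕ, f (k + N) * (1 - t^(k+N)) ≤ ∑' k : ℕ, f (k + N) := by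
      apply Summable.tsum_le_tsum _ _ hfN
      · intro k
        apply mul_le_of_le_one_right (hf _)
        have := pow_nonneg ht0 (k+N); linarith
      · exact Summable.of_nonneg_of_le (fun k => mul_nonneg (hf _) (one_sub_pow_nonneg ht0 ht1.le _))
          (fun k => mul_le_of_le_one_right (hf _) (by have := pow_nonneg ht0 (k+N); linarith)) hfN
    have hTNγ : (∑' k : ℕ, f (k + N)) * (N:ℝ)^γ ≤ ∑' k : ℕ, g (k + N) := by
      rw [← tsum_mul_right]
      apply Summable.tsum_le_tsum _ (hfN.mul_right _) hgN
      intro k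
      have : (N:ℝ)^γ ≤ ((k+N:ℕ):ℝ)^γ := by
        apply Real.rpow_le_rpow (Nat.cast_nonneg N) _ hγ0.le
        exact_mod_cast Nat.le_add_left N k
      calc f (k+N) * (N:ℝ)^γ ≤ f (k+N) * ((k+N:ℕ):ℝ)^γ :=
            mul_le_mul_of_nonneg_left this (hf _)
        _ = g (k+N) := rfl
    have hNγpos : (0:ℝ) < (N:ℝ)^γ := Real.rpow_pos_of_pos hNR0 γ
    have hTN2 : ∑' k : ℕ, f (k + N) ≤ S * ((N:ℝ)^γ)⁻¹ := by
      rw [← le_div_iff₀ hNγpos, div_eq_mul_inv] at hTNγ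
      calc ∑' k : ℕ, f (k + N) ≤ (∑' k : ℕ, g (k + N)) * ((N:ℝ)^γ)⁻¹ := hTNγ
        _ ≤ S * ((N:ℝ)^γ)⁻¹ := mul_le_mul_of_nonneg_right htmono (by positivity)
    calc ∑' k : ℕ, f (k + N) * (1 - t^(k+N)) ≤ ∑' k : ℕ, f (k + N) := hTNle
      _ ≤ S * ((N:ℝ)^γ)⁻¹ := hTN2
      _ ≤ S * ε^γ := mul_le_mul_of_nonneg_left hNεγ hSnn
      _ = ε^γ * S := by ring
  -- combine
  have hdecomp := Summable.sum_add_tsum_nat_add (f := fun k : ℕ => f k * (1 - t^k)) N hWsum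
  have hFid := one_sub_F_eq hf hfsum ht0 ht1.le
  have hlowt := hlow t ht ht1
  rw [hFid, ← hdecomp, h1tε] at hlowt
  have hcomb : c₁' * ε^γ ≤ ε*M + 3*ε^γ*S := by
    have : ∑' (i : ℕ), f (i + N) * (1 - t ^ (i + N)) ≤ ε^γ * S := hB
    linarith
  have hεγpos : (0:ℝ) < ε^γ := Real.rpow_pos_of_pos hε0 γ
  have hS38 : 3*ε^γ*S ≤ (1/2)*c₁'*ε^γ := by nlinarith
  have hkey : (c₁'/2) * ε^γ ≤ ε * M := by linarith
  have hεfac : ε = ε^γ * ε^(1-γ) := by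
    rw [← Real.rpow_add hε0]; norm_num
  have hfinal : c₁'/2 ≤ (M:ℝ) * ε^(1-γ) := by
    have hh : (c₁'/2) * ε^γ ≤ ((M:ℝ) * ε^(1-γ)) * ε^γ := by
      calc (c₁'/2) * ε^γ ≤ ε * M := hkey
        _ = ((M:ℝ) * ε^(1-γ)) * ε^γ := by
            conv_lhs => rw [hεfac]
            ring
    exact le_of_mul_le_mul_right hh hεγpos
  have hδbd : ε^(1-γ) ≤ c₁'/(4*M) := by
    calc ε^(1-γ) ≤ δ^(1-γ) := Real.rpow_le_rpow hε0.le hε3 h1γ.le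
      _ = c₁'/(4*M) := by
          rw [hδdef, ← Real.rpow_mul (by positivity)]
          rw [show (1/(1-γ))*(1-γ) = 1 by field_simp]
          exact Real.rpow_one _
  have : M * ε^(1-γ) ≤ c₁'/4 := by
    calc M * ε^(1-γ) ≤ M * (c₁'/(4*M)) := mul_le_mul_of_nonneg_left hδbd hM0.le
      _ = c₁'/4 := by field_simp
  linarith


/- STATEMENT 14: Corollary 3.2 (3). Null recurrent case (μ = 1) with
1 - G'(x) ∼ (1-x)^β as x → 1⁻, where G'(x) = ∑ n a_n x^{n-1} and 0 < β < 1.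
F(t) = ∑ f_n t^n satisfies F(t) = t G(F(t)). Then 1 - F(t) ∼ (1-t)^{1/(1+β)}
as t → 1⁻, and for 0 < α < 1, ∑ f_n n^α < ∞ iff α < 1/(1+β). -/
theorem stmt_14 (a : ℕ → ℝ) (ha : ∀ n, 0 ≤ a n) (ha0 : 0 < a 0)
    (ha01 : a 0 + a 1 < 1)
    (hsum : ∑' n, a n = 1) (hμ : ∑' n : ℕ, (n : ℝ) * a n = 1)
    (β : ℝ) (hβ0 : 0 < β) (hβ1 : β < 1)
    (hG' : ∃ c₁ c₂ x₁ : ℝ, 0 < c₁ ∧ c₁ < c₂ ∧ 0 < x₁ ∧ x₁ < 1 ∧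
      ∀ x : ℝ, x₁ < x → x < 1 →
        c₁ * (1 - x) ^ β ≤ 1 - ∑' n : ℕ, (n : ℝ) * a n * x ^ (n - 1) ∧
        1 - ∑' n : ℕ, (n : ℝ) * a n * x ^ (n - 1) ≤ c₂ * (1 - x) ^ β)
    (f : ℕ → ℝ) (hf : ∀ n, 0 ≤ f n) (hf0 : f 0 = 0) (hfsum : ∑' n, f n = 1)
    (hFeq : ∀ t : ℝ, 0 < t → t < 1 →
      ∑' n : ℕ, f n * t ^ n = t * ∑' n : ℕ, a n * (∑' m : ℕ, f m * t ^ m) ^ n) :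
    (∃ c₁' c₂' t₀ : ℝ, 0 < c₁' ∧ c₁' < c₂' ∧ 0 < t₀ ∧ t₀ < 1 ∧
      ∀ t : ℝ, t₀ < t → t < 1 →
        c₁' * (1 - t) ^ (1 / (1 + β)) ≤ 1 - ∑' n : ℕ, f n * t ^ n ∧
        1 - ∑' n : ℕ, f n * t ^ n ≤ c₂' * (1 - t) ^ (1 / (1 + β))) ∧
    (∀ α : ℝ, 0 < α → α < 1 →
      (Summable (fun n : ℕ => f n * (n : ℝ) ^ α) ↔ α < 1 / (1 + β))) := by
  have hp1 := part1 a ha ha0 ha01 hsum hμ β hβ0 hG' f hf hf0 hfsum hFeq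
  refine ⟨hp1, ?_⟩
  obtain ⟨c₁', c₂', t₀, hc₁'0, hc₁₂', ht₀0, ht₀1, hbd⟩ := hp1
  intro α hα0 hα1
  have hβ1' : (0:ℝ) < 1 + β := by linarith
  have hγ0 : 0 < 1/(1+β) := by positivity
  have hγ1 : 1/(1+β) < 1 := by rw [div_lt_one hβ1']; linarith
  constructor
  · intro hsummable
    by_contra hcon
    push_neg at hcon
    have hcmp : Summable (fun n : ℕ => f n * (n:ℝ)^(1/(1+β))) := by
      apply Summable.of_nonneg_of_le _ _ hsummable
      · intro n; exact mul_nonneg (hf n) (Real.rpow_nonneg (Nat.cast_nonneg n) _)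
      · intro n
        rcases Nat.eq_zero_or_pos n with h | h
        · subst h; simp [hf0]
        · apply mul_le_mul_of_nonneg_left _ (hf n)
          apply Real.rpow_le_rpow_of_exponent_le _ hcon
          exact_mod_cast h
    exact part2_notsum hf hfsum hγ0 hγ1 hc₁'0 ht₀0 ht₀1
      (fun t h1 h2 => (hbd t h1 h2).1) hcmp
  · intro hαγ
    exact part2_mpr hf hf0 hfsum (le_of_lt (lt_trans hc₁'0 hc₁₂')) ht₀1 hα0.le
      (fun t h1 h2 => (hbd t h1 h2).2) hαγ
end

section
/- Let (a_n)_{n≥0} be nonnegative reals with a_0 > 0, a_0 + a_1 < 1, ∑_{n=0}^∞ a_n = 1, and μ := ∑_{n=1}^∞ n a_n > 1 (possibly μ = ∞). Let G(t) = ∑_{n=0}^∞ a_n t^n and G'(t) = ∑_{n=1}^∞ n a_n t^{n−1}. Then: (1) there exists a unique x₀ ∈ (0,1) with G(x₀) = x₀·G'(x₀); (2) R₀ := x₀/G(x₀) > 1; (3) for every x ≥ 0 with G(x) < ∞ one has x/G(x) ≤ R₀, so that for t > R₀ the equation x = t·G(x) has no solution x ≥ 0 with G(x) < ∞; (4) x₀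 is the least nonnegative solution of x = R₀·G(x), and for every t ∈ [0, R₀] there exists a solution x ∈ [0, x₀] of x = t·G(x). -/
private lemma sbern : ∀ n : ℕ, 2 ≤ n → ∀ a : ℝ, -1 ≤ a → a ≠ 0 → 1 + (n : ℝ) * a < (1 + a) ^ n := by
  intro n hn
  induction n, hn using Nat.le_induction with
  | base =>
    intro a _ ha
    have h : 0 < a ^ 2 := by positivity
    push_cast; nlinarith
  | succ n hn ih =>
    intro a h1 h0
    rcases eq_or_lt_of_le (by linarith : (0:ℝ) ≤ 1 + a) with h | h
    · have ha : a = -1 := by linarith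
      subst ha
      have hn2 : (2:ℝ) ≤ (n:ℝ) := by exact_mod_cast hn
      have : (1 : ℝ) + (-1) = 0 := by ring
      rw [this, zero_pow (by omega : n + 1 ≠ 0)]
      push_cast; linarith
    · have ihn := ih a h1 h0
      have h2 := mul_lt_mul_of_pos_left ihn h
      have hsq : 0 ≤ a ^ 2 := sq_nonneg a
      have : (1 + a) ^ (n + 1) = (1 + a) * (1 + a) ^ n := by ring
      rw [this]
      push_cast
      nlinarith

private lemma pow_tangent (n : ℕ) (x y : ℝ) (hx : 0 ≤ x) (hy : 0 < y) :
    y ^ n + (n : ℝ) * y ^ (n - 1) * (x - y) ≤ x ^ n := by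
  cases n with
  | zero => simp
  | succ m =>
    have hyne : y ≠ 0 := ne_of_gt hy
    set a : ℝ := x / y - 1 with hadef
    have h1a : 1 + a = x / y := by rw [hadef]; ring
    have hb := one_add_mul_le_pow (by
      have : 0 ≤ x / y := div_nonneg hx hy.le
      simp only [hadef]; linarith : (-2:ℝ) ≤ a) (m + 1)
    have hyp : (0:ℝ) < y ^ (m + 1) := pow_pos hy _
    have := mul_le_mul_of_nonneg_right hb hyp.le
    calc y ^ (m + 1) + ((m + 1 : ℕ) : ℝ) * y ^ (m + 1 - 1) * (x - y)
        = (1 + ((m+1 : ℕ) : ℝ) * a) * y ^ (m + 1) := by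
          simp only [hadef, Nat.add_sub_cancel]
          field_simp
          ring
      _ ≤ (1 + a) ^ (m + 1) * y ^ (m + 1) := this
      _ = x ^ (m + 1) := by
          rw [h1a, div_pow]
          field_simp

private lemma pow_tangent_lt (n : ℕ) (hn : 2 ≤ n) (x y : ℝ) (hx : 0 ≤ x) (hy : 0 < y)
    (hxy : x ≠ y) : y ^ n + (n : ℝ) * y ^ (n - 1) * (x - y) < x ^ n := by
  have hyne : y ≠ 0 := ne_of_gt hy
  set a : ℝ := x / y - 1 with hadef
  have h1a : 1 + a = x / y := by rw [hadef]; ring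
  have hane : a ≠ 0 := by
    simp only [hadef]
    intro h
    apply hxy
    have : x / y = 1 := by linarith
    field_simp at this; linarith
  have hb := sbern n hn a (by
    have : 0 ≤ x / y := div_nonneg hx hy.le
    simp only [hadef]; linarith) hane
  have hyp : (0:ℝ) < y ^ n := pow_pos hy _
  have h2 := mul_lt_mul_of_pos_right hb hyp
  obtain ⟨m, rfl⟩ : ∃ m, n = m + 1 := ⟨n - 1, by omega⟩
  calc y ^ (m + 1) + ((m + 1 : ℕ) : ℝ) * y ^ (m + 1 - 1) * (x - y)
      = (1 + ((m+1 : ℕ) : ℝ) * a) * y ^ (m + 1) := by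
        simp only [hadef, Nat.add_sub_cancel]
        field_simp
        ring
    _ < (1 + a) ^ (m + 1) * y ^ (m + 1) := h2
    _ = x ^ (m + 1) := by
        rw [h1a, div_pow]
        field_simp

set_option maxHeartbeats 1000000 in
theorem stmt_15 (a : ℕ → ℝ) (ha : ∀ n, 0 ≤ a n) (ha0 : 0 < a 0)
    (ha01 : a 0 + a 1 < 1)
    (hsum : ∑' n, a n = 1)
    (hμ : ∃ N : ℕ, 1 < ∑ n ∈ Finset.range N, (n : ℝ) * a n) :
    ∃ x₀ : ℝ, 0 < x₀ ∧ x₀ < 1 ∧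
      (∑' n : ℕ, a n * x₀ ^ n) = x₀ * ∑' n : ℕ, (n : ℝ) * a n * x₀ ^ (n - 1) ∧
      (∀ y : ℝ, 0 < y → y < 1 →
        (∑' n : ℕ, a n * y ^ n) = y * (∑' n : ℕ, (n : ℝ) * a n * y ^ (n - 1)) →
        y = x₀) ∧
      1 < x₀ / ∑' n : ℕ, a n * x₀ ^ n ∧
      (∀ x : ℝ, 0 ≤ x → Summable (fun n : ℕ => a n * x ^ n) →
        x / ∑' n : ℕ, a n * x ^ n ≤ x₀ / ∑' n : ℕ, a n * x₀ ^ n) ∧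
      (∀ t : ℝ, x₀ / (∑' n : ℕ, a n * x₀ ^ n) < t →
        ¬ ∃ x : ℝ, 0 ≤ x ∧ Summable (fun n : ℕ => a n * x ^ n) ∧
          x = t * ∑' n : ℕ, a n * x ^ n) ∧
      (x₀ = (x₀ / ∑' n : ℕ, a n * x₀ ^ n) * ∑' n : ℕ, a n * x₀ ^ n) ∧
      (∀ x : ℝ, 0 ≤ x → Summable (fun n : ℕ => a n * x ^ n) →
        x = (x₀ / ∑' n : ℕ, a n * x₀ ^ n) * (∑' n : ℕ, a n * x ^ n) → x₀ ≤ x) ∧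
      (∀ t : ℝ, 0 ≤ t → t ≤ x₀ / ∑' n : ℕ, a n * x₀ ^ n →
        ∃ x : ℝ, 0 ≤ x ∧ x ≤ x₀ ∧ x = t * ∑' n : ℕ, a n * x ^ n) := by
  -- basic summability facts
  have hA : Summable a := by
    by_contra h
    rw [tsum_eq_zero_of_not_summable h] at hsum
    norm_num at hsum
  have ha1 : ∀ n, a n ≤ 1 := by
    intro n
    rw [← hsum]
    exact Summable.le_tsum hA n fun m _ => ha m
  have sumG : ∀ x : ℝ, 0 ≤ x → x ≤ 1 → Summable (fun n : ℕ => a n * x ^ n) := by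
    intro x h0 h1
    refine Summable.of_nonneg_of_le (fun n => mul_nonneg (ha n) (pow_nonneg h0 n)) (fun n => ?_) hA
    calc a n * x ^ n ≤ a n * 1 :=
          mul_le_mul_of_nonneg_left (pow_le_one₀ h0 h1) (ha n)
      _ = a n := mul_one _
  have sumH : ∀ x : ℝ, 0 ≤ x → x < 1 → Summable (fun n : ℕ => (n : ℝ) * a n * x ^ n) := by
    intro x h0 h1
    have hg : Summable (fun n : ℕ => (n : ℝ) * x ^ n) := by
      simpa using summable_pow_mul_geometric_of_norm_lt_one 1
        (r := x) (by rwa [Real.norm_eq_abs, abs_of_nonneg h0])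
    refine Summable.of_nonneg_of_le
      (fun n => mul_nonneg (mul_nonneg (Nat.cast_nonneg n) (ha n)) (pow_nonneg h0 n))
      (fun n => ?_) hg
    have h2 : a n * x ^ n ≤ 1 * x ^ n := mul_le_mul_of_nonneg_right (ha1 n) (pow_nonneg h0 n)
    rw [one_mul] at h2
    calc (n : ℝ) * a n * x ^ n = (n : ℝ) * (a n * x ^ n) := by ring
      _ ≤ (n : ℝ) * x ^ n := mul_le_mul_of_nonneg_left h2 (Nat.cast_nonneg n)
  have sumGp : ∀ x : ℝ, 0 < x → x < 1 →
      Summable (fun n : ℕ => (n : ℝ) * a n * x ^ (n - 1)) := by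
    intro x h0 h1
    refine ((sumH x h0.le h1).mul_left (1 / x)).congr fun n => ?_
    cases n with
    | zero => simp
    | succ m =>
      have hx := ne_of_gt h0
      simp only [Nat.add_sub_cancel, pow_succ]
      field_simp
  have hHGp : ∀ x : ℝ, 0 < x →
      x * (∑' n : ℕ, (n : ℝ) * a n * x ^ (n - 1)) = ∑' n : ℕ, (n : ℝ) * a n * x ^ n := by
    intro x h0
    rw [← tsum_mul_left]
    refine tsum_congr fun n => ?_
    cases n with
    | zero => simp
    | succ m =>
      simp only [Nat.add_sub_cancel, pow_succ]
      ring
  -- existence of n₀ ≥ 2 with a n₀ > 0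
  obtain ⟨n₀, hn₀2, hn₀pos⟩ : ∃ n₀, 2 ≤ n₀ ∧ 0 < a n₀ := by
    by_contra h
    push_neg at h
    have hz : ∀ n ∉ ({0, 1} : Finset ℕ), a n = 0 := by
      intro n hn
      simp only [Finset.mem_insert, Finset.mem_singleton] at hn
      push_neg at hn
      exact le_antisymm (h n (by omega)) (ha n)
    rw [tsum_eq_sum hz] at hsum
    simp [Finset.sum_pair (by norm_num : (0:ℕ) ≠ 1)] at hsum
    linarith
  -- tangent line inequalities for G
  have tangent : ∀ x y : ℝ, 0 ≤ x → 0 < y → y < 1 → Summable (fun n : ℕ => a n * x ^ n) →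
      (∑' n : ℕ, a n * y ^ n) + (x - y) * (∑' n : ℕ, (n : ℝ) * a n * y ^ (n - 1))
        ≤ ∑' n : ℕ, a n * x ^ n := by
    intro x y hx hy0 hy1 hsx
    have hf1 := sumG y hy0.le hy1.le
    have hf2 := (sumGp y hy0 hy1).mul_left (x - y)
    have key : ∀ n : ℕ, a n * y ^ n + (x - y) * ((n : ℝ) * a n * y ^ (n - 1)) ≤ a n * x ^ n := by
      intro n
      have h := pow_tangent n x y hx hy0
      have h2 := mul_le_mul_of_nonneg_left h (ha n)
      calc a n * y ^ n + (x - y) * ((n : ℝ) * a n * y ^ (n - 1))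
          = a n * (y ^ n + (n : ℝ) * y ^ (n - 1) * (x - y)) := by ring
        _ ≤ a n * x ^ n := h2
    have := Summable.tsum_le_tsum key (hf1.add hf2) hsx
    rwa [Summable.tsum_add hf1 hf2, tsum_mul_left] at this
  have tangent_lt : ∀ x y : ℝ, 0 ≤ x → 0 < y → y < 1 → x ≠ y →
      Summable (fun n : ℕ => a n * x ^ n) →
      (∑' n : ℕ, a n * y ^ n) + (x - y) * (∑' n : ℕ, (n : ℝ) * a n * y ^ (n - 1))
        < ∑' n : ℕ, a n * x ^ n := by
    intro x y hx hy0 hy1 hxy hsx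
    have hf1 := sumG y hy0.le hy1.le
    have hf2 := (sumGp y hy0 hy1).mul_left (x - y)
    have key : ∀ n : ℕ, a n * y ^ n + (x - y) * ((n : ℝ) * a n * y ^ (n - 1)) ≤ a n * x ^ n := by
      intro n
      have h := pow_tangent n x y hx hy0
      have h2 := mul_le_mul_of_nonneg_left h (ha n)
      calc a n * y ^ n + (x - y) * ((n : ℝ) * a n * y ^ (n - 1))
          = a n * (y ^ n + (n : ℝ) * y ^ (n - 1) * (x - y)) := by ring
        _ ≤ a n * x ^ n := h2
    have keyn₀ : a n₀ * y ^ n₀ + (x - y) * ((n₀ : ℝ) * a n₀ * y ^ (n₀ - 1)) < a n₀ * x ^ n₀ := by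
      have h := pow_tangent_lt n₀ hn₀2 x y hx hy0 hxy
      have h2 := mul_lt_mul_of_pos_left h hn₀pos
      calc a n₀ * y ^ n₀ + (x - y) * ((n₀ : ℝ) * a n₀ * y ^ (n₀ - 1))
          = a n₀ * (y ^ n₀ + (n₀ : ℝ) * y ^ (n₀ - 1) * (x - y)) := by ring
        _ < a n₀ * x ^ n₀ := h2
    have := Summable.tsum_lt_tsum key keyn₀ (hf1.add hf2) hsx
    rwa [Summable.tsum_add hf1 hf2, tsum_mul_left] at this
  -- continuity of G on [0,1]
  have contG : ContinuousOn (fun x : ℝ => ∑' n : ℕ, a n * x ^ n) (Set.Icc 0 1) := by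
    refine continuousOn_tsum (fun i => (continuous_const.mul (continuous_pow i)).continuousOn)
      hA fun n x hx => ?_
    rw [Real.norm_eq_abs, abs_of_nonneg (mul_nonneg (ha n) (pow_nonneg hx.1 n))]
    calc a n * x ^ n ≤ a n * 1 :=
          mul_le_mul_of_nonneg_left (pow_le_one₀ hx.1 hx.2) (ha n)
      _ = a n := mul_one _
  -- find r < 1 with partial sum > 1
  obtain ⟨N, hN⟩ := hμ
  obtain ⟨r, hr0, hr1, hrsum⟩ : ∃ r : ℝ, 0 < r ∧ r < 1 ∧
      1 < ∑ n ∈ Finset.range N, (n : ℝ) * a n * r ^ n := by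
    have hc : ContinuousAt (fun x : ℝ => ∑ n ∈ Finset.range N, (n : ℝ) * a n * x ^ n) 1 := by
      apply Continuous.continuousAt
      exact continuous_finset_sum _ fun i _ => continuous_const.mul (continuous_pow i)
    have hval : (1:ℝ) < ∑ n ∈ Finset.range N, (n : ℝ) * a n * (1:ℝ) ^ n := by
      simpa using hN
    have hev : ∀ᶠ x in nhds (1:ℝ), 1 < ∑ n ∈ Finset.range N, (n : ℝ) * a n * x ^ n :=
      hc.eventually (eventually_gt_nhds hval)
    rw [Metric.eventually_nhds_iff] at hev
    obtain ⟨ε, hε, hball⟩ := hev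
    refine ⟨1 - min (ε / 2) (1 / 2), by
        have := min_le_right (ε/2) (1/2); linarith, by
        have : 0 < min (ε/2) (1/2) := lt_min (by linarith) (by norm_num); linarith, ?_⟩
    apply hball
    rw [Real.dist_eq]
    have h1 : 0 < min (ε/2) (1/2) := lt_min (by linarith) (by norm_num)
    have h2 := min_le_left (ε/2) (1/2)
    rw [abs_of_nonpos (by linarith)]
    linarith
  -- the function φ = H - G and IVT
  set φ : ℝ → ℝ := fun x => (∑' n : ℕ, (n : ℝ) * a n * x ^ n) - ∑' n : ℕ, a n * x ^ n with hφdef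
  have contH : ContinuousOn (fun x : ℝ => ∑' n : ℕ, (n : ℝ) * a n * x ^ n) (Set.Icc 0 r) := by
    have hu : Summable (fun n : ℕ => (n : ℝ) * r ^ n) := by
      simpa using summable_pow_mul_geometric_of_norm_lt_one 1
        (r := r) (by rwa [Real.norm_eq_abs, abs_of_nonneg hr0.le])
    refine continuousOn_tsum
      (fun i => ((continuous_const.mul (continuous_pow i)).continuousOn)) hu fun n x hx => ?_
    rw [Real.norm_eq_abs,
      abs_of_nonneg (mul_nonneg (mul_nonneg (Nat.cast_nonneg n) (ha n)) (pow_nonneg hx.1 n))]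
    have h2 : a n * x ^ n ≤ 1 * x ^ n := mul_le_mul_of_nonneg_right (ha1 n) (pow_nonneg hx.1 n)
    rw [one_mul] at h2
    have h3 : x ^ n ≤ r ^ n := pow_le_pow_left₀ hx.1 hx.2 n
    calc (n : ℝ) * a n * x ^ n = (n : ℝ) * (a n * x ^ n) := by ring
      _ ≤ (n : ℝ) * r ^ n := mul_le_mul_of_nonneg_left (h2.trans h3) (Nat.cast_nonneg n)
  have contφ : ContinuousOn φ (Set.Icc 0 r) :=
    contH.sub (contG.mono (Set.Icc_subset_Icc le_rfl hr1.le))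
  have hG0 : (∑' n : ℕ, a n * (0:ℝ) ^ n) = a 0 := by
    rw [tsum_eq_single 0 (fun n hn => by
      cases n with
      | zero => exact absurd rfl hn
      | succ m => simp)]
    simp
  have hH0 : (∑' n : ℕ, (n : ℝ) * a n * (0:ℝ) ^ n) = 0 := by
    have : (fun n : ℕ => (n : ℝ) * a n * (0:ℝ) ^ n) = fun _ => 0 := by
      funext n
      cases n with
      | zero => simp
      | succ m => simp
    rw [this, tsum_zero]
  have hφ0 : φ 0 = -a 0 := by rw [hφdef]; simp [hG0, hH0]
  have hφr : 0 < φ r := by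
    have hGr : (∑' n : ℕ, a n * r ^ n) ≤ 1 := by
      rw [← hsum]
      refine Summable.tsum_le_tsum (fun n => ?_) (sumG r hr0.le hr1.le) hA
      calc a n * r ^ n ≤ a n * 1 :=
            mul_le_mul_of_nonneg_left (pow_le_one₀ hr0.le hr1.le) (ha n)
        _ = a n := mul_one _
    have hHr : (∑ n ∈ Finset.range N, (n : ℝ) * a n * r ^ n)
        ≤ ∑' n : ℕ, (n : ℝ) * a n * r ^ n := by
      exact Summable.sum_le_tsum _ (fun n _ =>
        mul_nonneg (mul_nonneg (Nat.cast_nonneg n) (ha n)) (pow_nonneg hr0.le n))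
        (sumH r hr0.le hr1)
    rw [hφdef]
    simp only
    linarith
  obtain ⟨x₀, hx₀mem, hx₀φ⟩ : ∃ x₀ ∈ Set.Icc (0:ℝ) r, φ x₀ = 0 := by
    have h := intermediate_value_Icc hr0.le contφ
    have h0 : (0:ℝ) ∈ Set.Icc (φ 0) (φ r) := ⟨by rw [hφ0]; linarith, hφr.le⟩
    obtain ⟨x₀, hmem, hx⟩ := h h0
    exact ⟨x₀, hmem, hx⟩
  have hx₀pos : 0 < x₀ := by
    rcases eq_or_lt_of_le hx₀mem.1 with h | h
    · exfalso; rw [← h] at hx₀φ; rw [hφ0] at hx₀φ; linarith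
    · exact h
  have hx₀lt1 : x₀ < 1 := lt_of_le_of_lt hx₀mem.2 hr1
  have hHx₀ : (∑' n : ℕ, (n : ℝ) * a n * x₀ ^ n) = ∑' n : ℕ, a n * x₀ ^ n := by
    have := hx₀φ
    rw [hφdef] at this
    simp only at this
    linarith
  have hfix : (∑' n : ℕ, a n * x₀ ^ n) = x₀ * ∑' n : ℕ, (n : ℝ) * a n * x₀ ^ (n - 1) := by
    rw [hHGp x₀ hx₀pos, hHx₀]
  -- strict monotonicity of φ on (0,1)
  have φmono : ∀ y y' : ℝ, 0 < y → y < y' → y' < 1 → φ y < φ y' := by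
    intro y y' hy hyy' hy'1
    have hy'0 : 0 < y' := hy.trans hyy'
    have hfy : Summable (fun n : ℕ => (n : ℝ) * a n * y ^ n - a n * y ^ n) :=
      (sumH y hy.le (hyy'.trans hy'1)).sub (sumG y hy.le (hyy'.trans hy'1).le)
    have hfy' : Summable (fun n : ℕ => (n : ℝ) * a n * y' ^ n - a n * y' ^ n) :=
      (sumH y' hy'0.le hy'1).sub (sumG y' hy'0.le hy'1.le)
    have key : ∀ n : ℕ, (n : ℝ) * a n * y ^ n - a n * y ^ n
        ≤ (n : ℝ) * a n * y' ^ n - a n * y' ^ n := by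
      intro n
      cases n with
      | zero => simp
      | succ m =>
        have hc : (0:ℝ) ≤ ((m + 1 : ℕ) : ℝ) - 1 := by push_cast; linarith [Nat.cast_nonneg (α := ℝ) m]
        have hp : y ^ (m + 1) ≤ y' ^ (m + 1) := pow_le_pow_left₀ hy.le hyy'.le _
        have := mul_le_mul_of_nonneg_left hp (mul_nonneg hc (ha (m+1)))
        calc ((m+1 : ℕ) : ℝ) * a (m+1) * y ^ (m+1) - a (m+1) * y ^ (m+1)
            = (((m+1 : ℕ) : ℝ) - 1) * a (m+1) * y ^ (m+1) := by ring
          _ ≤ (((m+1 : ℕ) : ℝ) - 1) * a (m+1) * y' ^ (m+1) := by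
              calc (((m+1 : ℕ) : ℝ) - 1) * a (m+1) * y ^ (m+1)
                  = (((m+1 : ℕ) : ℝ) - 1) * a (m+1) * y ^ (m+1) := rfl
                _ ≤ (((m+1 : ℕ) : ℝ) - 1) * a (m+1) * y' ^ (m+1) := by
                    rw [mul_assoc, mul_assoc]
                    exact mul_le_mul_of_nonneg_left
                      (mul_le_mul_of_nonneg_left hp (ha (m+1))) hc
          _ = ((m+1 : ℕ) : ℝ) * a (m+1) * y' ^ (m+1) - a (m+1) * y' ^ (m+1) := by ring
    have keyn₀ : (n₀ : ℝ) * a n₀ * y ^ n₀ - a n₀ * y ^ n₀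
        < (n₀ : ℝ) * a n₀ * y' ^ n₀ - a n₀ * y' ^ n₀ := by
      have hc : (0:ℝ) < (n₀ : ℝ) - 1 := by
        have : (2:ℝ) ≤ (n₀:ℝ) := by exact_mod_cast hn₀2
        linarith
      have hp : y ^ n₀ < y' ^ n₀ := pow_lt_pow_left₀ hyy' hy.le (by omega)
      have h2 : ((n₀ : ℝ) - 1) * a n₀ * y ^ n₀ < ((n₀ : ℝ) - 1) * a n₀ * y' ^ n₀ := by
        rw [mul_assoc, mul_assoc]
        exact mul_lt_mul_of_pos_left (mul_lt_mul_of_pos_left hp hn₀pos) hc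
      nlinarith [h2]
    have hlt := Summable.tsum_lt_tsum key keyn₀ hfy hfy'
    rw [Summable.tsum_sub (sumH y hy.le (hyy'.trans hy'1)) (sumG y hy.le (hyy'.trans hy'1).le),
      Summable.tsum_sub (sumH y' hy'0.le hy'1) (sumG y' hy'0.le hy'1.le)] at hlt
    exact hlt
  have huniq : ∀ y : ℝ, 0 < y → y < 1 →
      (∑' n : ℕ, a n * y ^ n) = y * (∑' n : ℕ, (n : ℝ) * a n * y ^ (n - 1)) → y = x₀ := by
    intro y hy hy1 heq
    have hφy : φ y = 0 := by
      rw [hφdef]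
      simp only
      rw [← hHGp y hy, ← heq]
      ring
    rcases lt_trichotomy y x₀ with h | h | h
    · exfalso; have := φmono y x₀ hy h hx₀lt1; rw [hφy, hx₀φ] at this; exact lt_irrefl 0 this
    · exact h
    · exfalso; have := φmono x₀ y hx₀pos h hy1; rw [hφy, hx₀φ] at this; exact lt_irrefl 0 this
  -- positivity of G x₀ and notation
  have hGx₀pos : 0 < ∑' n : ℕ, a n * x₀ ^ n := by
    have h := Summable.le_tsum (sumG x₀ hx₀pos.le hx₀lt1.le) 0
      (fun m _ => mul_nonneg (ha m) (pow_nonneg hx₀pos.le m))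
    simp only [pow_zero, mul_one] at h
    linarith
  have hG1 : (∑' n : ℕ, a n * (1:ℝ) ^ n) = 1 := by
    simp only [one_pow, mul_one]; exact hsum
  -- G x₀ < x₀
  have hGx₀lt : (∑' n : ℕ, a n * x₀ ^ n) < x₀ := by
    have ht := tangent_lt 1 x₀ zero_le_one hx₀pos hx₀lt1 (ne_of_gt hx₀lt1)
      (sumG 1 zero_le_one le_rfl)
    rw [hG1] at ht
    -- G x₀ + (1 - x₀) * Gp < 1, with G x₀ = x₀ * Gp
    set g := ∑' n : ℕ, a n * x₀ ^ n
    set p := ∑' n : ℕ, (n : ℝ) * a n * x₀ ^ (n - 1)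
    have hgp : g = x₀ * p := hfix
    have hpe : g + (1 - x₀) * p = p := by rw [hgp]; ring
    have hplt : p < 1 := by linarith
    have := mul_lt_mul_of_pos_left hplt hx₀pos
    rw [mul_one] at this
    linarith [hgp ▸ this]
  have hR₀ : 1 < x₀ / ∑' n : ℕ, a n * x₀ ^ n := (one_lt_div hGx₀pos).mpr hGx₀lt
  -- p > 0
  have hppos : 0 < ∑' n : ℕ, (n : ℝ) * a n * x₀ ^ (n - 1) := by
    by_contra h
    push_neg at h
    have h2 : x₀ * (∑' n : ℕ, (n : ℝ) * a n * x₀ ^ (n - 1)) ≤ 0 :=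
      mul_nonpos_of_nonneg_of_nonpos hx₀pos.le h
    rw [← hfix] at h2
    linarith
  -- ratio bound
  have hratio : ∀ x : ℝ, 0 ≤ x → Summable (fun n : ℕ => a n * x ^ n) →
      x / (∑' n : ℕ, a n * x ^ n) ≤ x₀ / ∑' n : ℕ, a n * x₀ ^ n := by
    intro x hx hsx
    have ht := tangent x x₀ hx hx₀pos hx₀lt1 hsx
    set g := ∑' n : ℕ, a n * x₀ ^ n with hg
    set p := ∑' n : ℕ, (n : ℝ) * a n * x₀ ^ (n - 1) with hp
    set Gx := ∑' n : ℕ, a n * x ^ n with hGx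
    have hgp : g = x₀ * p := hfix
    have hxp : x * p ≤ Gx := by
      have h2 : x * p = g + (x - x₀) * p := by rw [hgp]; ring
      linarith
    have hGxpos : 0 < Gx := by
      have h := Summable.le_tsum hsx 0 (fun m _ => mul_nonneg (ha m) (pow_nonneg hx m))
      simp only [pow_zero, mul_one] at h
      linarith
    rw [div_le_div_iff₀ hGxpos hGx₀pos]
    have h1 := mul_le_mul_of_nonneg_left hxp hx₀pos.le
    have h2 : x₀ * (x * p) = x * g := by rw [hgp]; ring
    linarith
  -- nonexistence for t > R₀
  have hnon : ∀ t : ℝ, x₀ / (∑' n : ℕ, a n * x₀ ^ n) < t →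
      ¬ ∃ x : ℝ, 0 ≤ x ∧ Summable (fun n : ℕ => a n * x ^ n) ∧
        x = t * ∑' n : ℕ, a n * x ^ n := by
    rintro t ht ⟨x, hx, hsx, heq⟩
    have hGxpos : 0 < ∑' n : ℕ, a n * x ^ n := by
      have h := Summable.le_tsum hsx 0 (fun m _ => mul_nonneg (ha m) (pow_nonneg hx m))
      simp only [pow_zero, mul_one] at h
      linarith
    have : x / (∑' n : ℕ, a n * x ^ n) = t :=
      (div_eq_iff (ne_of_gt hGxpos)).mpr heq
    have hle := hratio x hx hsx
    rw [this] at hle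
    linarith
  -- fixed point equation
  have hfixR : x₀ = (x₀ / ∑' n : ℕ, a n * x₀ ^ n) * ∑' n : ℕ, a n * x₀ ^ n :=
    (div_mul_cancel₀ x₀ (ne_of_gt hGx₀pos)).symm
  -- least solution
  have hleast : ∀ x : ℝ, 0 ≤ x → Summable (fun n : ℕ => a n * x ^ n) →
      x = (x₀ / ∑' n : ℕ, a n * x₀ ^ n) * (∑' n : ℕ, a n * x ^ n) → x₀ ≤ x := by
    intro x hx hsx heq
    by_cases hxx : x = x₀
    · rw [hxx]
    · exfalso
      have ht := tangent_lt x x₀ hx hx₀pos hx₀lt1 hxx hsx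
      set g := ∑' n : ℕ, a n * x₀ ^ n with hg
      set p := ∑' n : ℕ, (n : ℝ) * a n * x₀ ^ (n - 1) with hp
      set Gx := ∑' n : ℕ, a n * x ^ n with hGx
      have hgp : g = x₀ * p := hfix
      have heq' : x * g = x₀ * Gx := by
        have : x * g = (x₀ / g) * Gx * g := by rw [← heq]
        rw [this]
        field_simp
      have h1 := mul_lt_mul_of_pos_left ht hx₀pos
      have h2 : x₀ * (g + (x - x₀) * p) = x * g := by rw [hgp]; ring
      linarith
  -- existence for t ∈ [0, R₀]
  have hexist : ∀ t : ℝ, 0 ≤ t → t ≤ x₀ / ∑' n : ℕ, a n * x₀ ^ n →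
      ∃ x : ℝ, 0 ≤ x ∧ x ≤ x₀ ∧ x = t * ∑' n : ℕ, a n * x ^ n := by
    intro t ht htR
    set ψ : ℝ → ℝ := fun x => t * (∑' n : ℕ, a n * x ^ n) - x with hψdef
    have contψ : ContinuousOn ψ (Set.Icc 0 x₀) := by
      apply ContinuousOn.sub
      · exact continuousOn_const.mul (contG.mono (Set.Icc_subset_Icc le_rfl hx₀lt1.le))
      · exact continuousOn_id
    have hψ0 : 0 ≤ ψ 0 := by
      rw [hψdef]
      simp only [hG0]
      have := mul_nonneg ht ha0.le
      linarith
    have hψx₀ : ψ x₀ ≤ 0 := by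
      rw [hψdef]
      simp only
      have h1 : t * (∑' n : ℕ, a n * x₀ ^ n) ≤ (x₀ / ∑' n : ℕ, a n * x₀ ^ n) *
          (∑' n : ℕ, a n * x₀ ^ n) :=
        mul_le_mul_of_nonneg_right htR hGx₀pos.le
      rw [div_mul_cancel₀ x₀ (ne_of_gt hGx₀pos)] at h1
      linarith
    obtain ⟨x, hxmem, hψx⟩ : ∃ x ∈ Set.Icc (0:ℝ) x₀, ψ x = 0 := by
      have h := intermediate_value_Icc' hx₀pos.le contψ
      have h0 : (0:ℝ) ∈ Set.Icc (ψ x₀) (ψ 0) := ⟨hψx₀, hψ0⟩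
      obtain ⟨x, hmem, hx⟩ := h h0
      exact ⟨x, hmem, hx⟩
    refine ⟨x, hxmem.1, hxmem.2, ?_⟩
    rw [hψdef] at hψx
    simp only at hψx
    linarith
  exact ⟨x₀, hx₀pos, hx₀lt1, hfix, huniq, hR₀, hratio, hnon, hfixR, hleast, hexist⟩
end

section
/- Let (a_n)_{n≥0} be nonnegative reals with a_0 > 0, a_0 + a_1 < 1, ∑_{n=0}^∞ a_n = 1, and μ := ∑_{n=1}^∞ n a_n < 1. Let G(t) = ∑_{n=0}^∞ a_n t^n and G'(t) = ∑_{n=1}^∞ n a_n t^{n−1}. Suppose there exists x₁ ≥ 0 with G'(x₁) < ∞ and G(x₁) ≤ x₁·G'(x₁). Then there exists a unique x₀ ≥ 0 with G'(x₀) < ∞ and G(x₀) = x₀·G'(x₀); it satisfies x₀ > 1 and x₀/G(x₀) > 1. Moreover, for every x ≥ 0 with G(x) < ∞ one has x/G(x) ≤ x₀/G(x₀), and x₀ is the least nonnegative solution of x = (x₀/G(x₀))·G(x). -/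
lemma bern_le (t x : ℝ) (ht : 0 < t) (hx : 0 ≤ x) (n : ℕ) :
    t^n + (n:ℝ) * t^(n-1) * (x - t) ≤ x^n := by
  cases n with
  | zero => simp
  | succ m =>
    have hs : (-2:ℝ) ≤ x/t - 1 := by
      have : 0 ≤ x/t := div_nonneg hx ht.le
      linarith
    have h1 : 1 + ((m:ℝ)+1) * (x/t - 1) ≤ (x/t)^(m+1) := by
      have h := one_add_mul_le_pow hs (m+1)
      rw [show (1:ℝ) + (x/t - 1) = x/t by ring] at h
      push_cast at h
      linarith
    have htn : (0:ℝ) < t^(m+1) := pow_pos ht _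
    have key : t^(m+1) + ((m+1:ℕ):ℝ) * t^((m+1)-1) * (x - t)
        = (1 + ((m:ℝ)+1)*(x/t - 1)) * t^(m+1) := by
      have h' : m + 1 - 1 = m := rfl
      rw [h']
      push_cast
      field_simp
      ring
    rw [key]
    calc (1 + ((m:ℝ)+1)*(x/t-1)) * t^(m+1) ≤ (x/t)^(m+1) * t^(m+1) :=
          mul_le_mul_of_nonneg_right h1 htn.le
    _ = x^(m+1) := by rw [div_pow]; field_simp

lemma bern_lt (t x : ℝ) (ht : 0 < t) (hx : 0 ≤ x) (hne : x ≠ t) {n : ℕ} (hn : 2 ≤ n) :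
    t^n + (n:ℝ) * t^(n-1) * (x - t) < x^n := by
  obtain ⟨m, rfl⟩ : ∃ m, n = m + 1 := ⟨n-1, by omega⟩
  have hs : (-1:ℝ) ≤ x/t - 1 := by
    have : 0 ≤ x/t := div_nonneg hx ht.le
    linarith
  have hs0 : x/t - 1 ≠ 0 := by
    intro h
    apply hne
    have hxt : x/t = 1 := by linarith
    field_simp at hxt
    linarith
  have hp : (1:ℝ) < ((m:ℝ)+1) := by
    have h1 : 1 ≤ m := by omega
    have : (1:ℝ) ≤ (m:ℝ) := by exact_mod_cast h1
    linarith
  have h1 : 1 + ((m:ℝ)+1) * (x/t - 1) < (x/t)^(m+1) := by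
    have h := one_add_mul_self_lt_rpow_one_add hs hs0 hp
    rw [show (1:ℝ) + (x/t - 1) = x/t by ring] at h
    rw [show ((m:ℝ)+1) = ((m+1:ℕ):ℝ) by push_cast; ring, Real.rpow_natCast] at h
    push_cast at h
    linarith
  have htn : (0:ℝ) < t^(m+1) := pow_pos ht _
  have key : t^(m+1) + ((m+1:ℕ):ℝ) * t^((m+1)-1) * (x - t)
      = (1 + ((m:ℝ)+1)*(x/t - 1)) * t^(m+1) := by
    have h' : m + 1 - 1 = m := rfl
    rw [h']
    push_cast
    field_simp
    ring
  rw [key]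
  calc (1 + ((m:ℝ)+1)*(x/t-1)) * t^(m+1) < (x/t)^(m+1) * t^(m+1) :=
        mul_lt_mul_of_pos_right h1 htn
  _ = x^(m+1) := by rw [div_pow]; field_simp


/- STATEMENT 17: Theorem 5.1 (2). Positive recurrent case μ < 1. Suppose there
is x₁ ≥ 0 with G'(x₁) < ∞ and G(x₁) ≤ x₁ G'(x₁). Then there is a unique x₀ ≥ 0
with G'(x₀) < ∞ and G(x₀) = x₀ G'(x₀); it satisfies x₀ > 1 and x₀/G(x₀) > 1;
moreover x/G(x) ≤ x₀/G(x₀) whenever x ≥ 0 and G(x) < ∞, and x₀ is the least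
nonnegative solution (with G(x) < ∞) of x = (x₀/G(x₀)) G(x). -/
set_option maxHeartbeats 2000000 in
theorem stmt_17 (a : ℕ → ℝ) (ha : ∀ n, 0 ≤ a n) (ha0 : 0 < a 0)
    (ha01 : a 0 + a 1 < 1)
    (hsum : ∑' n, a n = 1)
    (hμs : Summable (fun n : ℕ => (n : ℝ) * a n)) (hμ : ∑' n : ℕ, (n : ℝ) * a n < 1)
    (hx1 : ∃ x₁ : ℝ, 0 ≤ x₁ ∧ Summable (fun n : ℕ => (n : ℝ) * a n * x₁ ^ (n - 1)) ∧
      (∑' n : ℕ, a n * x₁ ^ n) ≤ x₁ * ∑' n : ℕ, (n : ℝ) * a n * x₁ ^ (n - 1)) :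
    ∃ x₀ : ℝ, 0 ≤ x₀ ∧ Summable (fun n : ℕ => (n : ℝ) * a n * x₀ ^ (n - 1)) ∧
      (∑' n : ℕ, a n * x₀ ^ n) = x₀ * (∑' n : ℕ, (n : ℝ) * a n * x₀ ^ (n - 1)) ∧
      (∀ y : ℝ, 0 ≤ y → Summable (fun n : ℕ => (n : ℝ) * a n * y ^ (n - 1)) →
        (∑' n : ℕ, a n * y ^ n) = y * (∑' n : ℕ, (n : ℝ) * a n * y ^ (n - 1)) →
        y = x₀) ∧
      1 < x₀ ∧
      1 < x₀ / ∑' n : ℕ, a n * x₀ ^ n ∧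
      (∀ x : ℝ, 0 ≤ x → Summable (fun n : ℕ => a n * x ^ n) →
        x / ∑' n : ℕ, a n * x ^ n ≤ x₀ / ∑' n : ℕ, a n * x₀ ^ n) ∧
      (x₀ = (x₀ / ∑' n : ℕ, a n * x₀ ^ n) * ∑' n : ℕ, a n * x₀ ^ n) ∧
      (∀ x : ℝ, 0 ≤ x → Summable (fun n : ℕ => a n * x ^ n) →
        x = (x₀ / ∑' n : ℕ, a n * x₀ ^ n) * (∑' n : ℕ, a n * x ^ n) → x₀ ≤ x) := by
  obtain ⟨x₁, hx₁0, hS₁, hI⟩ := hx1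
  -- summability of a
  have hA : Summable a := by
    by_contra h
    rw [tsum_eq_zero_of_not_summable h] at hsum
    norm_num at hsum
  -- existence of m ≥ 2 with a m > 0
  obtain ⟨m, hm2, ham⟩ : ∃ m, 2 ≤ m ∧ 0 < a m := by
    by_contra h
    push_neg at h
    have hz : ∀ n ∉ Finset.range 2, a n = 0 := by
      intro n hn
      simp only [Finset.mem_range, not_lt] at hn
      exact le_antisymm (h n hn) (ha n)
    rw [tsum_eq_sum hz] at hsum
    simp [Finset.sum_range_succ] at hsum
    linarith
  -- pointwise identity  x * (n aₙ x^{n-1}) = n aₙ x^n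
  have hxd : ∀ (x : ℝ) (n : ℕ), x * ((n:ℝ) * a n * x^(n-1)) = (n:ℝ) * a n * x^n := by
    intro x n
    cases n with
    | zero => simp
    | succ k =>
      have : k + 1 - 1 = k := rfl
      rw [this, pow_succ]
      push_cast
      ring
  have he : ∀ (x : ℝ) (n : ℕ),
      ((n:ℝ) - 1) * a n * x^n = x * ((n:ℝ) * a n * x^(n-1)) - a n * x^n := by
    intro x n
    rw [hxd]
    ring
  -- monotone summability for derivative series
  have hdmono : ∀ x y : ℝ, 0 ≤ x → x ≤ y →
      Summable (fun n : ℕ => (n:ℝ) * a n * y^(n-1)) →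
      Summable (fun n : ℕ => (n:ℝ) * a n * x^(n-1)) := by
    intro x y hx hxy hS
    refine hS.of_nonneg_of_le
      (fun n => mul_nonneg (mul_nonneg (Nat.cast_nonneg n) (ha n)) (pow_nonneg hx _))
      (fun n => ?_)
    exact mul_le_mul_of_nonneg_left (pow_le_pow_left₀ hx hxy _)
      (mul_nonneg (Nat.cast_nonneg n) (ha n))
  -- summability of G from summability of G'
  have hgs : ∀ x : ℝ, 0 ≤ x → Summable (fun n : ℕ => (n:ℝ) * a n * x^(n-1)) →
      Summable (fun n : ℕ => a n * x^n) := by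
    intro x hx hS
    rw [← summable_nat_add_iff 1]
    have hS' : Summable (fun n : ℕ => x * (((n+1:ℕ):ℝ) * a (n+1) * x^n)) := by
      have := ((summable_nat_add_iff 1).mpr hS).mul_left x
      simpa using this
    refine hS'.of_nonneg_of_le (fun n => mul_nonneg (ha _) (pow_nonneg hx _)) (fun n => ?_)
    have h1 : (1:ℝ) ≤ ((n+1:ℕ):ℝ) := by exact_mod_cast Nat.one_le_iff_ne_zero.mpr (Nat.succ_ne_zero n)
    have hxn : (0:ℝ) ≤ x^n := pow_nonneg hx n
    have han := ha (n+1)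
    calc a (n+1) * x^(n+1) = x * (1 * a (n+1) * x^n) := by rw [pow_succ]; ring
    _ ≤ x * (((n+1:ℕ):ℝ) * a (n+1) * x^n) := by
        apply mul_le_mul_of_nonneg_left _ hx
        apply mul_le_mul_of_nonneg_right _ hxn
        exact mul_le_mul_of_nonneg_right h1 han
  -- E-series: summability and value
  have hE : ∀ x : ℝ, 0 ≤ x → Summable (fun n : ℕ => (n:ℝ) * a n * x^(n-1)) →
      Summable (fun n : ℕ => ((n:ℝ) - 1) * a n * x^n) ∧
      (∑' n : ℕ, ((n:ℝ) - 1) * a n * x^n)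
        = x * (∑' n : ℕ, (n:ℝ) * a n * x^(n-1)) - ∑' n : ℕ, a n * x^n := by
    intro x hx hS
    have hg := hgs x hx hS
    have h1 : (fun n : ℕ => ((n:ℝ) - 1) * a n * x^n)
        = fun n : ℕ => x * ((n:ℝ) * a n * x^(n-1)) - a n * x^n := funext (he x)
    constructor
    · rw [h1]; exact (hS.mul_left x).sub hg
    · rw [h1, Summable.tsum_sub (hS.mul_left x) hg, tsum_mul_left]
  -- E at 1
  have hd1 : Summable (fun n : ℕ => (n:ℝ) * a n * (1:ℝ)^(n-1)) := by simpa using hμs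
  have hE1 : (∑' n : ℕ, ((n:ℝ) - 1) * a n * (1:ℝ)^n) = (∑' n : ℕ, (n:ℝ) * a n) - 1 := by
    have h1 : (fun n : ℕ => ((n:ℝ) - 1) * a n * (1:ℝ)^n)
        = fun n : ℕ => (n:ℝ) * a n - a n := by
      funext n; rw [one_pow]; ring
    rw [h1, Summable.tsum_sub hμs hA, hsum]
  -- strict monotonicity of E
  have hElt : ∀ x y : ℝ, 0 ≤ x → x < y →
      Summable (fun n : ℕ => (n:ℝ) * a n * x^(n-1)) →
      Summable (fun n : ℕ => (n:ℝ) * a n * y^(n-1)) →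
      (∑' n : ℕ, ((n:ℝ) - 1) * a n * x^n) < (∑' n : ℕ, ((n:ℝ) - 1) * a n * y^n) := by
    intro x y hx hxy hSx hSy
    refine Summable.tsum_lt_tsum (i := m) (fun n => ?_) ?_ (hE x hx hSx).1 ((hE y (hx.trans hxy.le) hSy).1)
    · cases n with
      | zero => simp
      | succ k =>
        have h1 : (0:ℝ) ≤ ((k+1:ℕ):ℝ) - 1 := by
          push_cast; linarith [Nat.cast_nonneg (α := ℝ) k]
        exact mul_le_mul_of_nonneg_left (pow_le_pow_left₀ hx hxy.le _)
          (mul_nonneg h1 (ha _))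
    · have h1 : (0:ℝ) < ((m:ℝ) - 1) * a m := by
        have : (2:ℝ) ≤ (m:ℝ) := by exact_mod_cast hm2
        exact mul_pos (by linarith) ham
      exact mul_lt_mul_of_pos_left (pow_lt_pow_left₀ hxy hx (by omega)) h1
  -- x₁ ≥ 1
  have hEx₁ : 0 ≤ ∑' n : ℕ, ((n:ℝ) - 1) * a n * x₁^n := by
    rw [(hE x₁ hx₁0 hS₁).2]; linarith
  have h1x₁ : 1 ≤ x₁ := by
    by_contra h
    push_neg at h
    have := hElt x₁ 1 hx₁0 h hS₁ hd1
    rw [hE1] at this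
    linarith
  -- IVT
  have hcont : ContinuousOn (fun x : ℝ => ∑' n : ℕ, ((n:ℝ) - 1) * a n * x^n)
      (Set.Icc 0 x₁) := by
    apply continuousOn_tsum (u := fun n : ℕ => x₁ * ((n:ℝ) * a n * x₁^(n-1)) + a n * x₁^n)
    · intro n
      exact ((continuous_const.mul (continuous_pow n))).continuousOn
    · exact (hS₁.mul_left x₁).add (hgs x₁ hx₁0 hS₁)
    · intro n x hxmem
      obtain ⟨hx0, hxle⟩ := hxmem
      rw [hxd]
      have h1 : |((n:ℝ) - 1) * a n * x^n| = |(n:ℝ) - 1| * a n * x^n := by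
        rw [abs_mul, abs_mul, abs_of_nonneg (ha n), abs_of_nonneg (pow_nonneg hx0 n)]
      rw [Real.norm_eq_abs, h1]
      have hn0 : (0:ℝ) ≤ (n:ℝ) := Nat.cast_nonneg n
      have h2 : |(n:ℝ) - 1| ≤ (n:ℝ) + 1 := by
        rw [abs_le]; constructor <;> linarith
      have h3 : x^n ≤ x₁^n := pow_le_pow_left₀ hx0 hxle n
      calc |(n:ℝ) - 1| * a n * x^n ≤ ((n:ℝ) + 1) * a n * x₁^n := by
            apply mul_le_mul (mul_le_mul_of_nonneg_right h2 (ha n)) h3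
              (pow_nonneg hx0 n) (mul_nonneg (by linarith) (ha n))
      _ = (n:ℝ) * a n * x₁^n + a n * x₁^n := by ring
  have hmem : (0:ℝ) ∈ Set.Icc ((fun x : ℝ => ∑' n : ℕ, ((n:ℝ) - 1) * a n * x^n) 1)
      ((fun x : ℝ => ∑' n : ℕ, ((n:ℝ) - 1) * a n * x^n) x₁) := by
    simp only
    constructor
    · rw [hE1]; linarith
    · exact hEx₁
  obtain ⟨x₀, hx₀mem, hFx₀⟩ :=
    intermediate_value_Icc h1x₁ (hcont.mono (Set.Icc_subset_Icc (by norm_num) le_rfl)) hmem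
  simp only at hFx₀
  obtain ⟨hx₀1, hx₀x₁⟩ := hx₀mem
  have hx₀0 : (0:ℝ) ≤ x₀ := by linarith
  have hx₀pos : (0:ℝ) < x₀ := by linarith
  -- basic objects at x₀
  have hSd₀ : Summable (fun n : ℕ => (n:ℝ) * a n * x₀^(n-1)) := hdmono x₀ x₁ hx₀0 hx₀x₁ hS₁
  have hSg₀ : Summable (fun n : ℕ => a n * x₀^n) := hgs x₀ hx₀0 hSd₀
  have heq : (∑' n : ℕ, a n * x₀^n) = x₀ * (∑' n : ℕ, (n:ℝ) * a n * x₀^(n-1)) := by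
    have h := (hE x₀ hx₀0 hSd₀).2
    rw [hFx₀] at h
    linarith
  -- x₀ > 1
  have hx₀gt1 : 1 < x₀ := by
    rcases lt_or_eq_of_le hx₀1 with h | h
    · exact h
    · exfalso
      rw [← h] at hFx₀
      rw [hE1] at hFx₀
      linarith
  -- positivity of G
  have hGpos : ∀ x : ℝ, 0 ≤ x → Summable (fun n : ℕ => a n * x^n) →
      0 < ∑' n : ℕ, a n * x^n := by
    intro x hx hS
    have h0 : a 0 * x^0 ≤ ∑' n : ℕ, a n * x^n :=
      Summable.le_tsum hS 0 (fun j _ => mul_nonneg (ha j) (pow_nonneg hx j))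
    simp only [pow_zero, mul_one] at h0
    linarith
  have hG₀pos := hGpos x₀ hx₀0 hSg₀
  -- G x₀ < x₀
  have hGlt : (∑' n : ℕ, a n * x₀^n) < x₀ := by
    have hterm : ∀ n : ℕ, a n * x₀^n - a n ≤ (x₀ - 1) * ((n:ℝ) * a n * x₀^(n-1)) := by
      intro n
      have hb := bern_le x₀ 1 hx₀pos (by norm_num) n
      rw [one_pow] at hb
      nlinarith [mul_le_mul_of_nonneg_left hb (ha n)]
    have hstrict : a m * x₀^m - a m < (x₀ - 1) * ((m:ℝ) * a m * x₀^(m-1)) := by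
      have hb := bern_lt x₀ 1 hx₀pos (by norm_num) (by linarith) hm2
      rw [one_pow] at hb
      nlinarith [mul_lt_mul_of_pos_left hb ham]
    have h := Summable.tsum_lt_tsum hterm hstrict (hSg₀.sub hA) (hSd₀.mul_left _)
    rw [Summable.tsum_sub hSg₀ hA, hsum, tsum_mul_left] at h
    rw [heq] at h ⊢
    nlinarith [h, hx₀pos, hx₀gt1]
  -- tangent bound : x * D₀ ≤ G x  (nonstrict, all x ≥ 0 with G x summable)
  have htan : ∀ x : ℝ, 0 ≤ x → Summable (fun n : ℕ => a n * x^n) →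
      x * (∑' n : ℕ, (n:ℝ) * a n * x₀^(n-1)) ≤ ∑' n : ℕ, a n * x^n := by
    intro x hx hSx
    have hterm : ∀ n : ℕ,
        a n * x₀^n + (x - x₀) * ((n:ℝ) * a n * x₀^(n-1)) ≤ a n * x^n := by
      intro n
      have hb := bern_le x₀ x hx₀pos hx n
      nlinarith [mul_le_mul_of_nonneg_left hb (ha n)]
    have h := Summable.tsum_le_tsum hterm (hSg₀.add (hSd₀.mul_left _)) hSx
    rw [Summable.tsum_add hSg₀ (hSd₀.mul_left _), tsum_mul_left] at h
    rw [heq] at h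
    nlinarith [h]
  refine ⟨x₀, hx₀0, hSd₀, heq, ?_, hx₀gt1, ?_, ?_, ?_, ?_⟩
  · -- uniqueness
    intro y hy hSdy heqy
    have hEy : (∑' n : ℕ, ((n:ℝ) - 1) * a n * y^n) = 0 := by
      rw [(hE y hy hSdy).2]
      linarith
    rcases lt_trichotomy y x₀ with h | h | h
    · exfalso
      have := hElt y x₀ hy h hSdy hSd₀
      rw [hEy, hFx₀] at this
      exact lt_irrefl 0 this
    · exact h
    · exfalso
      have := hElt x₀ y hx₀0 h hSd₀ hSdy
      rw [hEy, hFx₀] at this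
      exact lt_irrefl 0 this
  · exact (one_lt_div hG₀pos).mpr hGlt
  · -- global max of x/G(x)
    intro x hx hSx
    rw [div_le_div_iff₀ (hGpos x hx hSx) hG₀pos]
    have h := htan x hx hSx
    rw [heq]
    nlinarith [h, hx₀pos]
  · exact (div_mul_cancel₀ x₀ (ne_of_gt hG₀pos)).symm
  · -- least fixed point
    intro x hx hSx heqx
    rcases eq_or_ne x x₀ with rfl | hne
    · exact le_rfl
    · exfalso
      -- strict tangent bound
      have hterm : ∀ n : ℕ,
          a n * x₀^n + (x - x₀) * ((n:ℝ) * a n * x₀^(n-1)) ≤ a n * x^n := by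
        intro n
        have hb := bern_le x₀ x hx₀pos hx n
        nlinarith [mul_le_mul_of_nonneg_left hb (ha n)]
      have hstrict : a m * x₀^m + (x - x₀) * ((m:ℝ) * a m * x₀^(m-1)) < a m * x^m := by
        have hb := bern_lt x₀ x hx₀pos hx hne hm2
        nlinarith [mul_lt_mul_of_pos_left hb ham]
      have h := Summable.tsum_lt_tsum hterm hstrict (hSg₀.add (hSd₀.mul_left _)) hSx
      rw [Summable.tsum_add hSg₀ (hSd₀.mul_left _), tsum_mul_left] at h
      -- h : G x₀ + (x - x₀) * D₀ < G x
      have hG0ne : (∑' n : ℕ, a n * x₀ ^ n) ≠ 0 := ne_of_gt hG₀pos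
      obtain ⟨GX, hGX⟩ : ∃ t, (∑' n : ℕ, a n * x ^ n) = t := ⟨_, rfl⟩
      rw [hGX] at h heqx
      have hxG : x * (∑' n : ℕ, a n * x₀ ^ n) = x₀ * GX := by
        rw [heqx]
        field_simp
      rw [heq] at h hxG
      nlinarith [h, hxG, hx₀pos]
end
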